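/- arXiv:2106.05957 — 2 statements merged into one kernel-verified Lean document; each statement's English description precedes it below -/
import Mathlib

section
/- A random choice rule ρ has a Logit-EU representation (i.e., there is a continuous, strictly increasing u: X_{n+1} → ℝ such that ρ(a,S) = exp(∑_c u(c)·a(c_{n+1})) / ∑_{a'∈S} exp(∑_c u(c)·a'(c_{n+1})) for every a∈S and S∈𝒮) if and only if the collection of minimal separators is 𝒜 = {{n+1}} and ρ satisfies Full-support, Correctly Perceived Independence, Correctly Perceived Dominance, and Correctly Perceived Continuity. -/
open scoped Classical BigOperators
open Filter

namespace SubjCausality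

/-- Vectors of realized values of variables 1,…,n+1 (coordinate `j : Fin (n+1)`
corresponds to variable `j+1`; the last coordinate is the consequence). -/
abbrev Vec (n : ℕ) := Fin (n + 1) → ℝ

/-- Nodes 0,1,…,n+1 of a causal model. -/
abbrev Node (n : ℕ) := Fin (n + 2)

/-- An action: a finite-support probability distribution over vectors of covariates and
the consequence, with consequence values in `C`. -/
structure Act (n : ℕ) (C : Set ℝ) where
  mass : Vec n →₀ ℝ
  nonneg : ∀ y, 0 ≤ mass y
  total : mass.sum (fun _ p => p) = 1
  outC : ∀ y ∈ mass.support, y (Fin.last n) ∈ C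

/-- The grand state space 𝒳 = 𝒳₀ × 𝒳₋₀: an action paired with a realization vector. -/
abbrev Omega (n : ℕ) (C : Set ℝ) := Act n C × Vec n

variable {n : ℕ} {C : Set ℝ}

/-- The mixture α p + (1-α) r of two actions. -/
noncomputable def mix (α : ℝ) (h0 : 0 ≤ α) (h1 : α ≤ 1) (p r : Act n C) : Act n C where
  mass := α • p.mass + (1 - α) • r.mass
  nonneg := by
    intro y
    have hp := p.nonneg y
    have hr := r.nonneg y
    have hy : (α • p.mass + (1 - α) • r.mass) y = α * p.mass y + (1 - α) * r.mass y := by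
      simp [Finsupp.smul_apply, smul_eq_mul]
    rw [hy]; nlinarith
  total := by
    rw [Finsupp.sum_add_index' (fun _ => rfl) (fun _ _ _ => rfl)]
    rw [Finsupp.sum_smul_index (fun _ => rfl), Finsupp.sum_smul_index (fun _ => rfl)]
    have h1' : (p.mass.sum fun _ c => α * c) = α * p.mass.sum fun _ c => c :=
      (Finsupp.mul_sum _ _).symm
    have h2' : (r.mass.sum fun _ c => (1 - α) * c) = (1 - α) * r.mass.sum fun _ c => c :=
      (Finsupp.mul_sum _ _).symm
    rw [h1', h2', p.total, r.total]; ring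
  outC := by
    intro y hy
    rw [Finsupp.mem_support_iff] at hy
    have hy' : α * p.mass y + (1 - α) * r.mass y ≠ 0 := by
      simpa [Finsupp.smul_apply, smul_eq_mul] using hy
    by_cases hp : p.mass y = 0
    · have hr : r.mass y ≠ 0 := by
        intro h0'; apply hy'; rw [hp, h0']; ring
      exact r.outC y (Finsupp.mem_support_iff.mpr hr)
    · exact p.outC y (Finsupp.mem_support_iff.mpr hp)

/-- Marginal probability under action `a` of the event that the variables indexed by the
node set `I` take the values prescribed by `y` (node `j+1` corresponds to coordinate `j`). -/
noncomputable def margP (a : Act n C) (I : Finset (Node n)) (y : Vec n) : ℝ :=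
  ∑ z ∈ a.mass.support.filter (fun z => ∀ j : Fin (n + 1), (j.succ : Node n) ∈ I → z j = y j),
    a.mass z

/-- The support of the `j`-th covariate (variable `j+1`, `j : Fin n`) of an action. -/
noncomputable def covSupp (a : Act n C) (j : Fin n) : Finset ℝ :=
  a.mass.support.image (fun y => y j.castSucc)

/-- Menus: finite sets of at least two actions for which the support of the joint
distribution of the covariates is the product of the marginal supports, for all actions. -/
def IsMenu (S : Finset (Act n C)) : Prop :=
  2 ≤ S.card ∧
    ∀ a ∈ S, ∀ b ∈ S, ∀ x : Fin n → ℝ,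
      ((∀ j : Fin n, x j ∈ covSupp a j) ↔ ∃ y ∈ b.mass.support, ∀ j : Fin n, y j.castSucc = x j)

/-- A random choice rule. -/
structure RCR (n : ℕ) (C : Set ℝ) where
  prob : Act n C → Finset (Act n C) → ℝ
  nonneg : ∀ a S, 0 ≤ prob a S
  le_one : ∀ a S, prob a S ≤ 1
  sum_one : ∀ S, IsMenu S → ∑ a ∈ S, prob a S = 1
  not_mem : ∀ a S, a ∉ S → prob a S = 0

/-- Probability of the event `E` for the mass function `μ` supported inside `D`. -/
noncomputable def pr (D : Finset (Omega n C)) (μ : Omega n C → ℝ) (E : Set (Omega n C)) : ℝ :=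
  ∑ ω ∈ D.filter (fun ω => ω ∈ E), μ ω

/-- Conditional probability. -/
noncomputable def cpr (D : Finset (Omega n C)) (μ : Omega n C → ℝ) (E F : Set (Omega n C)) : ℝ :=
  pr D μ (E ∩ F) / pr D μ F

/-- The parents of node `i` in the graph `R`. -/
def parents (R : Node n → Node n → Prop) (i : Node n) : Set (Node n) := {k | R k i}

/-- The event that the variables indexed by `J` agree with the realization `ω`. -/
def agreeEvent (J : Set (Node n)) (ω : Omega n C) : Set (Omega n C) :=
  {ω' | ((0 : Node n) ∈ J → ω'.1 = ω.1) ∧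
    ∀ j : Fin (n + 1), (j.succ : Node n) ∈ J → ω'.2 j = ω.2 j}

/-- The value `p_R(ω)` of the `R`-factorized distribution `p_R` at `ω`, where `p` is
the distribution with mass function `μ` supported inside `D`:
`p_R(x) = ∏_j p(x_j | x_{R(j)})`. -/
noncomputable def pRval (D : Finset (Omega n C)) (μ : Omega n C → ℝ)
    (R : Node n → Node n → Prop) (ω : Omega n C) : ℝ :=
  cpr D μ (agreeEvent {0} ω) (agreeEvent (parents R 0) ω) *
    ∏ j : Fin (n + 1),
      cpr D μ (agreeEvent {(j.succ : Node n)} ω) (agreeEvent (parents R j.succ) ω)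

/-- `p_R(c_{n+1} | a)`: the probability under `p_R` of consequence `c` given action `a`. -/
noncomputable def predOut (D : Finset (Omega n C)) (μ : Omega n C → ℝ)
    (R : Node n → Node n → Prop) (a : Act n C) (c : ℝ) : ℝ :=
  (∑ ω ∈ D.filter (fun ω => ω.1 = a ∧ ω.2 (Fin.last n) = c), pRval D μ R ω) /
    (∑ ω ∈ D.filter (fun ω => ω.1 = a), pRval D μ R ω)

/-- `p_R(x_E | a)`: the probability under `p_R` of the variables indexed by `E` agreeing
with `x`, given action `a`. -/
noncomputable def predVarsCond (D : Finset (Omega n C)) (μ : Omega n C → ℝ)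
    (R : Node n → Node n → Prop) (a : Act n C) (E : Finset (Node n)) (x : Vec n) : ℝ :=
  (∑ ω ∈ D.filter
      (fun ω => ω.1 = a ∧ ∀ j : Fin (n + 1), (j.succ : Node n) ∈ E → ω.2 j = x j),
    pRval D μ R ω) /
    (∑ ω ∈ D.filter (fun ω => ω.1 = a), pRval D μ R ω)

/-- The values taken by coordinate `j` across the actions in `S`. -/
noncomputable def coordVals (S : Finset (Act n C)) (j : Fin (n + 1)) : Finset ℝ :=
  S.biUnion (fun a => a.mass.support.image (fun y => y j))

/-- All vectors whose coordinates each appear in the corresponding marginal support of `S`. -/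
noncomputable def grid (S : Finset (Act n C)) : Finset (Vec n) :=
  Fintype.piFinset (fun j => coordVals S j)

/-- A finite set containing the support of any distribution over `Omega` generated by
choices from `S` together with its `R`-factorized version. -/
noncomputable def extSupport (S : Finset (Act n C)) : Finset (Omega n C) :=
  S ×ˢ grid S

/-- The joint mass on `Omega` induced by choosing action `a` with weight `w a`. -/
noncomputable def wMass (w : Act n C → ℝ) : Omega n C → ℝ := fun ω => w ω.1 * ω.1.mass ω.2

/-- The joint mass `ρ^S`. -/
noncomputable def rhoMass (ρ : RCR n C) (S : Finset (Act n C)) : Omega n C → ℝ :=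
  wMass (fun a => ρ.prob a S)

/-- Expected utility `∫ u(c) d p_R(c_{n+1}|a)` of action `a`, where `p` is the joint
distribution on `Omega` induced by the choice weights `w` over the menu `S`. -/
noncomputable def menuEU (S : Finset (Act n C)) (w : Act n C → ℝ)
    (R : Node n → Node n → Prop) (u : ℝ → ℝ) (a : Act n C) : ℝ :=
  ∑ c ∈ coordVals S (Fin.last n), u c * predOut (extSupport S) (wMass w) R a c

/-! ### DAG notions -/

/-- `R` is acyclic. -/
def IsDAGRel (R : Node n → Node n → Prop) : Prop := ∀ i, ¬ Relation.TransGen R i i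

/-- No variable causes the action. -/
def Uninformed (R : Node n → Node n → Prop) : Prop := ∀ i : Node n, i ≠ 0 → ¬ R i 0

/-- An active path from 0 to n+1 in `R`: a sequence (i₀ = 0, …, i_m = n+1) with
consecutive links. -/
def IsAP (R : Node n → Node n → Prop) (l : List (Node n)) : Prop :=
  l ≠ [] ∧ l.head? = some 0 ∧ l.getLast? = some (Fin.last (n + 1)) ∧ l.Chain' R

/-- Nontrivial: there is a causal chain from the action to the consequence whose
intermediate nodes are variables. -/
def NontrivialDAG (R : Node n → Node n → Prop) : Prop :=
  ∃ l : List (Node n), IsAP R l ∧ ∀ x ∈ l.tail, x ≠ (0 : Node n)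

/-- Perfect: no v-colliders. -/
def IsPerfect (R : Node n → Node n → Prop) : Prop :=
  ∀ i j k : Node n, i ≠ j → R i k → R j k → R i j ∨ R j i

/-- A minimal active path (R-MAP). -/
def IsMAP (R : Node n → Node n → Prop) (l : List (Node n)) : Prop :=
  IsAP R l ∧
    ∀ j j' : Fin l.length, (j' : ℕ) ≠ (j : ℕ) + 1 → ¬ R (l.get j) (l.get j')

/-! ### Subjective causality representations -/

/-- `ρ` has a subjective causality representation `(R, u)`. -/
def HasSCR (ρ : RCR n C) (R : Node n → Node n → Prop) (u : ℝ → ℝ) : Prop :=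
  IsDAGRel R ∧ Uninformed R ∧ NontrivialDAG R ∧
    ContinuousOn u C ∧ StrictMonoOn u C ∧
    ∀ S : Finset (Act n C), IsMenu S → ∀ a ∈ S,
      ρ.prob a S =
        Real.exp (menuEU S (fun b => ρ.prob b S) R u a) /
          ∑ b ∈ S, Real.exp (menuEU S (fun b' => ρ.prob b' S) R u b)

/-- `ρ` has a perfect subjective causality representation. -/
def HasPerfectSCR (ρ : RCR n C) : Prop :=
  ∃ (R : Node n → Node n → Prop) (u : ℝ → ℝ), HasSCR ρ R u ∧ IsPerfect R

/-! ### Independence, separation, and minimal separators -/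

/-- The node set `N = {1,…,n+1}` of variables. -/
def varNodes (n : ℕ) : Finset (Node n) := Finset.univ.erase 0

/-- `X_I` is independent of `X_J` within the menu `S`. -/
def IndepWithin (S : Finset (Act n C)) (I J : Finset (Node n)) : Prop :=
  (∀ a ∈ S, ∀ b ∈ S, ∀ y : Vec n, margP a I y = margP b I y) ∧
    (∀ a ∈ S, ∀ y : Vec n, margP a (I ∪ J) y = margP a I y * margP a J y)

/-- The set `I ⊆ N` separates for `ρ`. -/
def Separates (ρ : RCR n C) (I : Finset (Node n)) : Prop :=
  ∀ a b : Act n C, IsMenu ({a, b} : Finset (Act n C)) →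
    IndepWithin ({a, b} : Finset (Act n C)) I (varNodes n \ I) →
    ρ.prob a ({a, b} : Finset (Act n C)) = 1 / 2

/-- The collection 𝒜 of minimal separators. -/
def MinSeps (ρ : RCR n C) : Set (Finset (Node n)) :=
  {I | I ⊆ varNodes n ∧ Separates ρ I ∧ ∀ J ⊂ I, ¬ Separates ρ J}

/-- The recursive ordering `A*_1, …, A*_{|𝒜|}` of the minimal separators
(`A i` is `A*_{i+1}` in the paper's notation). -/
def IsSepOrdering (ρ : RCR n C) {m : ℕ} (A : Fin (m + 1) → Finset (Node n)) : Prop :=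
  Function.Injective A ∧
    (∀ i, A i ∈ MinSeps ρ) ∧
    (∀ B ∈ MinSeps ρ, ∃ i, A i = B) ∧
    A (Fin.last m) = ({Fin.last (n + 1)} : Finset (Node n)) ∧
    ∀ i : Fin m,
      (∀ B ∈ MinSeps ρ, (∀ j : Fin (m + 1), (i : ℕ) < (j : ℕ) → B ≠ A j) →
        B ∩ A i.succ ⊆ A i.castSucc ∩ A i.succ) ∧
      (∀ a b : Act n C, IsMenu ({a, b} : Finset (Act n C)) →
        IndepWithin ({a, b} : Finset (Act n C)) (A i.castSucc ∩ A i.succ)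
          (varNodes n \ (A i.castSucc ∩ A i.succ)) →
        IndepWithin ({a, b} : Finset (Act n C)) (A i.succ \ A i.castSucc)
          (A i.castSucc \ A i.succ) →
        ρ.prob a ({a, b} : Finset (Act n C)) = 1 / 2)

/-- Prepend the convention `A*_0 = {0}` to an ordering of the minimal separators. -/
def withZero {m : ℕ} (A : Fin (m + 1) → Finset (Node n)) : Fin (m + 2) → Finset (Node n) :=
  Fin.cases ({0} : Finset (Node n)) A

/-- `j` is revealed to cause `k` for `ρ`. -/
def RevealedCause (ρ : RCR n C) (j k : Node n) : Prop :=
  ∀ (R : Node n → Node n → Prop) (u : ℝ → ℝ), HasSCR ρ R u → R j k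

/-! ### Distributions on 𝒳, equivalence of DAGs, fundamental links, N* -/

/-- `μ` (supported inside `D`) is a finite-support distribution on `𝒳 = 𝒳₀ × 𝒳₋₀`
with consequence values in `C`. -/
def IsFinDist (D : Finset (Omega n C)) (μ : Omega n C → ℝ) : Prop :=
  (∀ ω, 0 ≤ μ ω) ∧ (∀ ω, ω ∉ D → μ ω = 0) ∧ (∑ ω ∈ D, μ ω = 1) ∧
    ∀ ω ∈ D, μ ω ≠ 0 → ω.2 (Fin.last n) ∈ C

/-- Two DAGs are equivalent if they induce the same factorized distribution `p_Q = p_{Q'}`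
for every finite-support `p ∈ Δ(𝒳)`. -/
def DagEquiv (C : Set ℝ) {n : ℕ} (Q Q' : Node n → Node n → Prop) : Prop :=
  ∀ (D : Finset (Omega n C)) (μ : Omega n C → ℝ), IsFinDist D μ →
    ∀ ω ∈ D, μ ω ≠ 0 → pRval D μ Q ω = pRval D μ Q' ω

/-- The link `j Q k` is fundamental in `Q` (written `j Q̂ k`). -/
def FundamentalLink (C : Set ℝ) {n : ℕ} (Q : Node n → Node n → Prop) (j k : Node n) : Prop :=
  Q j k ∧ ∀ G : Node n → Node n → Prop,
    IsDAGRel G → Uninformed G → DagEquiv C Q G → G j k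

/-- The restriction `Q ∩ (M × M)` of a relation to a node set. -/
def restrictRel (Q : Node n → Node n → Prop) (M : Finset (Node n)) :
    Node n → Node n → Prop :=
  fun i j => Q i j ∧ i ∈ M ∧ j ∈ M

/-- The marginal on the consequence of `p_Q(·|a)` agrees with that of `p_{Q ∩ M×M}(·|a)`
for every finite-support `p ∈ Δ(𝒳)` and every action `a`. -/
def OutcomeEquivOn (C : Set ℝ) {n : ℕ} (Q : Node n → Node n → Prop)
    (M : Finset (Node n)) : Prop :=
  ∀ (D : Finset (Omega n C)) (μ : Omega n C → ℝ), IsFinDist D μ →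
    ∀ (a : Act n C) (c : ℝ), predOut D μ Q a c = predOut D μ (restrictRel Q M) a c

/-- `M` is the minimal node set `N*(Q)`. -/
def IsNStar (C : Set ℝ) {n : ℕ} (Q : Node n → Node n → Prop) (M : Finset (Node n)) : Prop :=
  OutcomeEquivOn C Q M ∧ ∀ M' : Finset (Node n), OutcomeEquivOn C Q M' → M ⊆ M'

/-- A well-behaved DAG: perfect, uninformed, nontrivial, and `R ⊆ N*(R) × N*(R)`
(where `M = N*(R)`). -/
def WellBehaved (C : Set ℝ) {n : ℕ} (R : Node n → Node n → Prop)
    (M : Finset (Node n)) : Prop :=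
  IsDAGRel R ∧ Uninformed R ∧ NontrivialDAG R ∧ IsPerfect R ∧ IsNStar C R M ∧
    ∀ i j : Node n, R i j → i ∈ M ∧ j ∈ M

/-! ### Cliques and junction trees -/

/-- A clique of the skeleton of `R`. -/
def IsClique (R : Node n → Node n → Prop) (Cq : Finset (Node n)) : Prop :=
  ∀ i ∈ Cq, ∀ j ∈ Cq, i ≠ j → (R i j ∨ R j i)

/-- A maximal clique of the skeleton of `R`. -/
def IsMaxClique (R : Node n → Node n → Prop) (Cq : Finset (Node n)) : Prop :=
  IsClique R Cq ∧ ∀ Cq' : Finset (Node n), IsClique R Cq' → Cq ⊆ Cq' → Cq = Cq'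

/-- A maximal clique junction tree for `R`: an enumeration of all maximal cliques
along a path satisfying the running-intersection property. -/
def IsMCJT (R : Node n → Node n → Prop) {m : ℕ} (Cs : Fin (m + 1) → Finset (Node n)) : Prop :=
  Function.Injective Cs ∧
    (∀ i, IsMaxClique R (Cs i)) ∧
    (∀ Cq : Finset (Node n), IsMaxClique R Cq → ∃ i, Cs i = Cq) ∧
    ∀ i k j : Fin (m + 1), i ≤ k → k ≤ j → Cs i ∩ Cs j ⊆ Cs k

/-! ### Conditionals of the joint choice distribution, correct perception, axioms -/

/-- The event that the variables indexed by `J` take the values prescribed by `y`. -/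
def vecEvent (J : Finset (Node n)) (y : Vec n) : Set (Omega n C) :=
  {ω | ∀ j : Fin (n + 1), (j.succ : Node n) ∈ J → ω.2 j = y j}

/-- `ρ^S(y_E | y_J)`. -/
noncomputable def condVars (ρ : RCR n C) (S : Finset (Act n C))
    (E J : Finset (Node n)) (y : Vec n) : ℝ :=
  pr (extSupport S) (rhoMass ρ S) (vecEvent (E ∪ J) y) /
    pr (extSupport S) (rhoMass ρ S) (vecEvent J y)

/-- `y` is in the support of (the 𝒳₋₀-marginal of) `ρ^S`. -/
def aeVec (ρ : RCR n C) (S : Finset (Act n C)) (y : Vec n) : Prop :=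
  0 < pr (extSupport S) (rhoMass ρ S) {ω | ω.2 = y}

/-- `a(y_E | y_J)`: conditional probability within a single action. -/
noncomputable def acond (a : Act n C) (E J : Finset (Node n)) (y : Vec n) : ℝ :=
  margP a (E ∪ J) y / margP a J y

/-- A correctly perceived menu (relative to the ordering `A` of the minimal separators). -/
def CorrectlyPerceived (ρ : RCR n C) {m : ℕ} (A : Fin (m + 1) → Finset (Node n))
    (S : Finset (Act n C)) : Prop :=
  ∀ a ∈ S, ∀ b ∈ S, ∀ y ∈ a.mass.support,
    margP b (Finset.univ.biUnion A) y =
      margP b (A 0) y * ∏ i : Fin m, acond a (A i.succ \ A i.castSucc) (A i.castSucc) y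

/-- Expected value of `f` of the consequence under the action `a`. -/
noncomputable def outExp (a : Act n C) (f : ℝ → ℝ) : ℝ :=
  a.mass.sum (fun y w => w * f (y (Fin.last n)))

/-- Weak convergence of the consequence marginals. -/
def OutTendsto (ak : ℕ → Act n C) (a : Act n C) : Prop :=
  ∀ f : ℝ → ℝ, Continuous f →
    Tendsto (fun k => outExp (ak k) f) atTop (nhds (outExp a f))

/-- The CDF of the consequence under `a`. -/
noncomputable def outCDF (a : Act n C) (t : ℝ) : ℝ :=
  ∑ y ∈ a.mass.support.filter (fun y => y (Fin.last n) ≤ t), a.mass y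

/-- `marg_{n+1} p` strictly first-order stochastically dominates `marg_{n+1} q`. -/
def StrictFOSD (p q : Act n C) : Prop :=
  (∀ t : ℝ, outCDF p t ≤ outCDF q t) ∧ ∃ t : ℝ, outCDF p t < outCDF q t

/-- Axiom 1 (Full-support). -/
def AxiomFullSupport (ρ : RCR n C) : Prop :=
  ∀ S : Finset (Act n C), IsMenu S → ∀ a ∈ S, 0 < ρ.prob a S

/-- Axiom 2 (Bounded Misperception). -/
def AxiomBounded (ρ : RCR n C) : Prop :=
  ∃ K : ℝ, ∀ S : Finset (Act n C), IsMenu S → ∀ a ∈ S, ∀ b ∈ S,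
    ρ.prob a S / ρ.prob b S ≤ K

/-- Axiom 3 (Consistent Revealed Causes). -/
def AxiomCRC (ρ : RCR n C) : Prop :=
  ({Fin.last (n + 1)} : Finset (Node n)) ∈ MinSeps ρ ∧
    ∃ (m : ℕ) (A : Fin (m + 1) → Finset (Node n)), IsSepOrdering ρ A

/-- Axiom 4 (Indifferent If Identical Immediate Implications, I5). -/
def AxiomI5 (ρ : RCR n C) {m : ℕ} (A : Fin (m + 1) → Finset (Node n)) : Prop :=
  ∀ S : Finset (Act n C), IsMenu S → ∀ a ∈ S, ∀ b ∈ S,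
    (∀ y : Vec n, margP a (A 0) y = margP b (A 0) y) → ρ.prob a S = ρ.prob b S

/-- Axiom 5 (Luce's Choice Axiom Given Inferences, LCI). -/
def AxiomLCI (ρ : RCR n C) {m : ℕ} (A : Fin (m + 1) → Finset (Node n)) : Prop :=
  ∀ (S : Finset (Act n C)) (Sm : ℕ → Finset (Act n C)),
    IsMenu S → (∀ k, IsMenu (Sm k)) →
    ∀ a b : Act n C, a ∈ S → b ∈ S → (∀ k, a ∈ Sm k) → (∀ k, b ∈ Sm k) →
    (∀ y : Vec n, aeVec ρ S y → ∀ i : Fin m,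
      Tendsto (fun k => condVars ρ (Sm k) (A i.succ \ A i.castSucc) (A i.castSucc) y)
        atTop (nhds (condVars ρ S (A i.succ \ A i.castSucc) (A i.castSucc) y))) →
    Tendsto (fun k => ρ.prob a (Sm k) / ρ.prob b (Sm k)) atTop
      (nhds (ρ.prob a S / ρ.prob b S))

/-- Axiom 6 (Correctly Perceived Independence). -/
def AxiomCPInd (ρ : RCR n C) {m : ℕ} (A : Fin (m + 1) → Finset (Node n)) : Prop :=
  ∀ (α β : ℝ) (hα0 : 0 < α) (hα1 : α < 1) (hβ0 : 0 < β) (hβ1 : β < 1) (p r : Act n C),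
    IsMenu ({mix α hα0.le hα1.le p r, r} : Finset (Act n C)) →
    CorrectlyPerceived ρ A ({mix α hα0.le hα1.le p r, r} : Finset (Act n C)) →
    IsMenu ({mix β hβ0.le hβ1.le p r, r} : Finset (Act n C)) →
    CorrectlyPerceived ρ A ({mix β hβ0.le hβ1.le p r, r} : Finset (Act n C)) →
    β * Real.log (ρ.prob (mix α hα0.le hα1.le p r) {mix α hα0.le hα1.le p r, r} /
        ρ.prob r {mix α hα0.le hα1.le p r, r}) =
      α * Real.log (ρ.prob (mix β hβ0.le hβ1.le p r) {mix β hβ0.le hβ1.le p r, r} /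
        ρ.prob r {mix β hβ0.le hβ1.le p r, r})

/-- Axiom 7 (Correctly Perceived Dominance). -/
def AxiomCPDom (ρ : RCR n C) {m : ℕ} (A : Fin (m + 1) → Finset (Node n)) : Prop :=
  ∀ p q : Act n C, IsMenu ({p, q} : Finset (Act n C)) →
    CorrectlyPerceived ρ A ({p, q} : Finset (Act n C)) →
    StrictFOSD p q → 1 / 2 < ρ.prob p ({p, q} : Finset (Act n C))

/-- Axiom 8 (Correctly Perceived Continuity). -/
def AxiomCPCont (ρ : RCR n C) {m : ℕ} (A : Fin (m + 1) → Finset (Node n)) : Prop :=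
  ∀ (S : Finset (Act n C)) (pk qk : ℕ → Act n C) (p q : Act n C),
    IsMenu S → CorrectlyPerceived ρ A S →
    (∀ k, IsMenu ({pk k, qk k} : Finset (Act n C))) →
    (∀ k, CorrectlyPerceived ρ A ({pk k, qk k} : Finset (Act n C))) →
    p ∈ S → q ∈ S → OutTendsto pk p → OutTendsto qk q →
    Tendsto (fun k => ρ.prob (qk k) ({pk k, qk k} : Finset (Act n C)) /
        ρ.prob (pk k) ({pk k, qk k} : Finset (Act n C))) atTop
      (nhds (ρ.prob q S / ρ.prob p S))

/-- Logit expected utility representation. -/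
def HasLogitEU (ρ : RCR n C) : Prop :=
  ∃ u : ℝ → ℝ, ContinuousOn u C ∧ StrictMonoOn u C ∧
    ∀ S : Finset (Act n C), IsMenu S → ∀ a ∈ S,
      ρ.prob a S = Real.exp (outExp a u) / ∑ b ∈ S, Real.exp (outExp b u)

/-- `ρ₂` has a coarser model than `ρ₁`. -/
def Coarser (ρ₂ ρ₁ : RCR n C) : Prop :=
  ∀ S : Finset (Act n C), IsMenu S →
    (∀ j : Node n, j ∈ varNodes n → (∀ I ∈ MinSeps ρ₂, j ∉ I) →
      IndepWithin S ({j} : Finset (Node n)) (varNodes n \ {j})) →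
    ∀ a : Act n C, ρ₁.prob a S = ρ₂.prob a S

/-- The revealed DAG `R^ρ` (relative to the ordering `A`). -/
def revealedDAG (ρ : RCR n C) {m : ℕ} (A : Fin (m + 1) → Finset (Node n)) :
    Node n → Node n → Prop :=
  fun j k => RevealedCause ρ j k ∨
    ∃ i : Fin (m + 1), j ∈ withZero A i.succ \ withZero A i.castSucc ∧
      k ∈ withZero A i.succ \ withZero A i.castSucc ∧ j < k



/-! ### Auxiliary infrastructure for the proof -/

section AuxProof

theorem Act.ext' {a b : Act n C} (h : a.mass = b.mass) : a = b := by
  cases a; cases b; cases h; rfl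

theorem Act.support_nonempty (a : Act n C) : a.mass.support.Nonempty := by
  rcases Finset.eq_empty_or_nonempty a.mass.support with h | h
  · exfalso
    have := a.total
    rw [Finsupp.sum, h] at this
    simp at this
  · exact h

def evec (n : ℕ) (c : ℝ) : Vec n := fun j => if j = Fin.last n then c else 0

theorem evec_last (c : ℝ) : evec n c (Fin.last n) = c := by simp [evec]

theorem evec_injective : Function.Injective (evec n) := by
  intro c d h
  have := congrFun h (Fin.last n)
  simpa [evec] using this

theorem evec_castSucc (c : ℝ) (j : Fin n) : evec n c j.castSucc = 0 := by
  simp [evec, (Fin.castSucc_lt_last j).ne]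

def IsDist (C : Set ℝ) (ν : ℝ →₀ ℝ) : Prop :=
  (∀ c, 0 ≤ ν c) ∧ ν.sum (fun _ p => p) = 1 ∧ ∀ c ∈ ν.support, c ∈ C

noncomputable def stdAct (C : Set ℝ) (n : ℕ) (ν : ℝ →₀ ℝ) (hν : IsDist C ν) : Act n C where
  mass := ν.mapDomain (evec n)
  nonneg := by
    intro y
    by_cases hy : y ∈ Set.range (evec n)
    · obtain ⟨c, rfl⟩ := hy
      rw [Finsupp.mapDomain_apply evec_injective]
      exact hν.1 c
    · rw [Finsupp.mapDomain_notin_range _ _ hy]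
  total := by
    rw [Finsupp.sum_mapDomain_index (fun _ => rfl) (fun _ _ _ => rfl)]
    exact hν.2.1
  outC := by
    intro y hy
    obtain ⟨c, hc, rfl⟩ := Finset.mem_image.mp
      (Finsupp.mapDomain_support_of_injective evec_injective ν ▸ hy)
    rw [evec_last]
    exact hν.2.2 c hc

theorem stdAct_mass (ν : ℝ →₀ ℝ) (hν : IsDist C ν) :
    (stdAct C n ν hν).mass = ν.mapDomain (evec n) := rfl

theorem stdAct_support (ν : ℝ →₀ ℝ) (hν : IsDist C ν) :
    (stdAct C n ν hν).mass.support = ν.support.image (evec n) :=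
  Finsupp.mapDomain_support_of_injective evec_injective ν

theorem stdAct_inj {ν μ : ℝ →₀ ℝ} {hν : IsDist C ν} {hμ : IsDist C μ}
    (h : stdAct C n ν hν = stdAct C n μ hμ) : ν = μ := by
  have := congrArg Act.mass h
  exact Finsupp.mapDomain_injective evec_injective this

theorem dist_support_nonempty {ν : ℝ →₀ ℝ} (hν : IsDist C ν) : ν.support.Nonempty := by
  rcases Finset.eq_empty_or_nonempty ν.support with h | h
  · exfalso
    have := hν.2.1
    rw [Finsupp.sum, h] at this
    simp at this
  · exact h

/-! #### Menus and standard acts -/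

theorem menu_pair_ne {a b : Act n C} (h : IsMenu ({a, b} : Finset (Act n C))) : a ≠ b := by
  rintro rfl
  have h1 := h.1
  simp at h1

theorem isMenu_pair_of_mem {S : Finset (Act n C)} (hS : IsMenu S) {p q : Act n C}
    (hp : p ∈ S) (hq : q ∈ S) (hne : p ≠ q) : IsMenu ({p, q} : Finset (Act n C)) := by
  refine ⟨by rw [Finset.card_pair hne], ?_⟩
  intro a ha b hb x
  have ha' : a ∈ S := by
    rcases Finset.mem_insert.mp ha with h | h
    · exact h ▸ hp
    · exact (Finset.mem_singleton.mp h) ▸ hq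
  have hb' : b ∈ S := by
    rcases Finset.mem_insert.mp hb with h | h
    · exact h ▸ hp
    · exact (Finset.mem_singleton.mp h) ▸ hq
  exact hS.2 a ha' b hb' x

theorem covSupp_stdAct (ν : ℝ →₀ ℝ) (hν : IsDist C ν) (j : Fin n) :
    covSupp (stdAct C n ν hν) j = {0} := by
  rw [covSupp, stdAct_support, Finset.image_image]
  have h : ((fun y : Vec n => y j.castSucc) ∘ evec n) = fun _ => (0:ℝ) := by
    funext c; simp [Function.comp, evec_castSucc]
  rw [h]
  exact Finset.image_const (dist_support_nonempty hν) 0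

theorem isMenu_std {T : Finset (Act n C)} (hcard : 2 ≤ T.card)
    (hstd : ∀ a ∈ T, ∃ ν hν, a = stdAct C n ν hν) : IsMenu T := by
  refine ⟨hcard, ?_⟩
  intro a ha b hb x
  obtain ⟨ν, hν, rfl⟩ := hstd a ha
  obtain ⟨μ, hμ, rfl⟩ := hstd b hb
  constructor
  · intro h
    obtain ⟨c, hc⟩ := dist_support_nonempty hμ
    refine ⟨evec n c, ?_, ?_⟩
    · rw [stdAct_support]; exact Finset.mem_image_of_mem _ hc
    · intro j
      have hx := h j
      rw [covSupp_stdAct, Finset.mem_singleton] at hx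
      rw [evec_castSucc, hx]
  · rintro ⟨y, hy, hyx⟩ j
    rw [covSupp_stdAct, Finset.mem_singleton]
    rw [stdAct_support] at hy
    obtain ⟨c, _, rfl⟩ := Finset.mem_image.mp hy
    rw [← hyx j, evec_castSucc]

/-! #### Dirac distributions -/

noncomputable def ddist (c : ℝ) : ℝ →₀ ℝ := Finsupp.single c 1

theorem isDist_ddist {c : ℝ} (hc : c ∈ C) : IsDist C (ddist c) := by
  refine ⟨?_, ?_, ?_⟩
  · intro d; rw [ddist, Finsupp.single_apply]; split <;> norm_num
  · simp [ddist, Finsupp.sum_single_index]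
  · intro d hd
    rw [ddist, Finsupp.support_single_ne_zero _ one_ne_zero, Finset.mem_singleton] at hd
    exact hd ▸ hc

theorem ddist_injective : Function.Injective (ddist) := by
  intro c d h
  by_contra hne
  have h1 := DFunLike.congr_fun h c
  rw [ddist, ddist, Finsupp.single_apply, Finsupp.single_apply] at h1
  simp [Ne.symm hne] at h1

/-! #### Expected values and marginals -/

theorem outExp_stdAct (ν : ℝ →₀ ℝ) (hν : IsDist C ν) (f : ℝ → ℝ) :
    outExp (stdAct C n ν hν) f = ν.sum (fun c w => w * f c) := by
  rw [outExp, stdAct_mass, Finsupp.sum_mapDomain_index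
    (fun b => zero_mul (f (b (Fin.last n))))
    (fun b m₁ m₂ => add_mul m₁ m₂ (f (b (Fin.last n))))]
  simp only [evec_last]

theorem outExp_dirac {c : ℝ} (hc : c ∈ C) (f : ℝ → ℝ) :
    outExp (stdAct C n (ddist c) (isDist_ddist hc)) f = f c := by
  rw [outExp_stdAct, ddist, Finsupp.sum_single_index (zero_mul (f c)), one_mul]

noncomputable def outMarg (a : Act n C) : ℝ →₀ ℝ := a.mass.mapDomain (fun y => y (Fin.last n))

theorem mapDomain_apply_nonneg {α β : Type*} (f : α → β) (v : α →₀ ℝ) (h : ∀ x, 0 ≤ v x)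
    (b : β) : 0 ≤ v.mapDomain f b := by
  classical
  rw [Finsupp.mapDomain, Finsupp.sum_apply, Finsupp.sum]
  apply Finset.sum_nonneg
  intro c _
  rw [Finsupp.single_apply]
  split
  · exact h c
  · exact le_refl 0

theorem isDist_outMarg (a : Act n C) : IsDist C (outMarg a) := by
  refine ⟨fun c => mapDomain_apply_nonneg _ _ a.nonneg c, ?_, ?_⟩
  · rw [outMarg, Finsupp.sum_mapDomain_index (fun _ => rfl) (fun _ _ _ => rfl)]
    exact a.total
  · intro c hc
    have := Finsupp.mapDomain_support hc
    obtain ⟨y, hy, rfl⟩ := Finset.mem_image.mp this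
    exact a.outC y hy

theorem outExp_eq_outMarg_sum (a : Act n C) (f : ℝ → ℝ) :
    outExp a f = (outMarg a).sum (fun c w => w * f c) := by
  rw [outMarg, Finsupp.sum_mapDomain_index
    (fun b => zero_mul (f b)) (fun b m₁ m₂ => add_mul m₁ m₂ (f b))]
  rfl

theorem outExp_stdAct_outMarg (a : Act n C) (f : ℝ → ℝ) :
    outExp (stdAct C n (outMarg a) (isDist_outMarg a)) f = outExp a f := by
  rw [outExp_stdAct, outExp_eq_outMarg_sum]

/-! #### Mixtures of distributions -/

theorem mixdist_apply (α : ℝ) (ν μ : ℝ →₀ ℝ) (c : ℝ) :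
    (α • ν + (1 - α) • μ) c = α * ν c + (1 - α) * μ c := by
  simp

theorem isDist_mixdist {ν μ : ℝ →₀ ℝ} (hν : IsDist C ν) (hμ : IsDist C μ) {α : ℝ}
    (h0 : 0 ≤ α) (h1 : α ≤ 1) : IsDist C (α • ν + (1 - α) • μ) := by
  refine ⟨?_, ?_, ?_⟩
  · intro c
    rw [mixdist_apply]
    nlinarith [hν.1 c, hμ.1 c]
  · rw [Finsupp.sum_add_index' (fun _ => rfl) (fun _ _ _ => rfl),
      Finsupp.sum_smul_index (fun _ => rfl), Finsupp.sum_smul_index (fun _ => rfl)]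
    have h1' : (ν.sum fun _ c => α * c) = α * ν.sum fun _ c => c := (Finsupp.mul_sum _ _).symm
    have h2' : (μ.sum fun _ c => (1 - α) * c) = (1 - α) * μ.sum fun _ c => c :=
      (Finsupp.mul_sum _ _).symm
    rw [h1', h2', hν.2.1, hμ.2.1]; ring
  · intro c hc
    rcases Finset.mem_union.mp (Finsupp.support_add hc) with h | h
    · exact hν.2.2 c (Finsupp.support_smul h)
    · exact hμ.2.2 c (Finsupp.support_smul h)

theorem mix_stdAct (α : ℝ) (h0 : 0 ≤ α) (h1 : α ≤ 1) (ν μ : ℝ →₀ ℝ)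
    (hν : IsDist C ν) (hμ : IsDist C μ) :
    mix α h0 h1 (stdAct C n ν hν) (stdAct C n μ hμ)
      = stdAct C n (α • ν + (1 - α) • μ) (isDist_mixdist hν hμ h0 h1) := by
  apply Act.ext'
  show α • ν.mapDomain (evec n) + (1 - α) • μ.mapDomain (evec n) = _
  rw [stdAct_mass, Finsupp.mapDomain_add, Finsupp.mapDomain_smul, Finsupp.mapDomain_smul]

theorem mixdist_ne {ν μ : ℝ →₀ ℝ} (hne : ν ≠ μ) {α : ℝ} (h0 : 0 < α) :
    α • ν + (1 - α) • μ ≠ μ := by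
  intro h
  apply hne
  ext c
  have h1 := DFunLike.congr_fun h c
  rw [mixdist_apply] at h1
  have h2 : α * ν c = α * μ c := by linarith
  exact mul_left_cancel₀ h0.ne' h2

/-! #### Dirac computations -/

theorem stdAct_ddist_mass {c : ℝ} (hc : c ∈ C) :
    (stdAct C n (ddist c) (isDist_ddist hc)).mass = Finsupp.single (evec n c) 1 := by
  rw [stdAct_mass, ddist, Finsupp.mapDomain_single]

theorem outCDF_dirac {c : ℝ} (hc : c ∈ C) (t : ℝ) :
    outCDF (stdAct C n (ddist c) (isDist_ddist hc)) t = if c ≤ t then 1 else 0 := by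
  rw [outCDF, stdAct_ddist_mass hc, Finsupp.support_single_ne_zero _ one_ne_zero,
    Finset.filter_singleton]
  simp only [evec_last]
  split
  · rw [Finset.sum_singleton, Finsupp.single_eq_same]
  · rw [Finset.sum_empty]

theorem margP_dirac {c : ℝ} (hc : c ∈ C) (I : Finset (Node n)) (y : Vec n) :
    margP (stdAct C n (ddist c) (isDist_ddist hc)) I y
      = if (∀ j : Fin (n+1), (j.succ : Node n) ∈ I → evec n c j = y j) then 1 else 0 := by
  rw [margP, stdAct_ddist_mass hc, Finsupp.support_single_ne_zero _ one_ne_zero,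
    Finset.filter_singleton]
  split
  · rw [Finset.sum_singleton, Finsupp.single_eq_same]
  · rw [Finset.sum_empty]

/-! #### Forward direction: consequences of a Logit-EU representation -/

section Forward

variable {ρ : RCR n C} {u : ℝ → ℝ}

theorem menu_nonempty {S : Finset (Act n C)} (hS : IsMenu S) : S.Nonempty :=
  Finset.card_pos.mp (by have := hS.1; omega)

theorem denom_pos (u : ℝ → ℝ) {S : Finset (Act n C)} (hS : IsMenu S) :
    0 < ∑ b ∈ S, Real.exp (outExp b u) :=
  Finset.sum_pos (fun b _ => Real.exp_pos _) (menu_nonempty hS)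

variable (hF : ∀ S : Finset (Act n C), IsMenu S → ∀ a ∈ S,
  ρ.prob a S = Real.exp (outExp a u) / ∑ b ∈ S, Real.exp (outExp b u))

include hF

theorem fwd_pos {S : Finset (Act n C)} (hS : IsMenu S) {a : Act n C} (ha : a ∈ S) :
    0 < ρ.prob a S := by
  rw [hF S hS a ha]
  exact div_pos (Real.exp_pos _) (denom_pos u hS)

theorem fwd_ratio {S : Finset (Act n C)} (hS : IsMenu S) {a b : Act n C}
    (ha : a ∈ S) (hb : b ∈ S) :
    ρ.prob a S / ρ.prob b S = Real.exp (outExp a u - outExp b u) := by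
  rw [hF S hS a ha, hF S hS b hb, Real.exp_sub]
  have hD := (denom_pos u hS).ne'
  rw [div_div_div_cancel_right₀]
  exact hD

theorem pair_formula {a b : Act n C} (hm : IsMenu ({a, b} : Finset (Act n C))) :
    ρ.prob a ({a, b} : Finset (Act n C))
      = Real.exp (outExp a u) / (Real.exp (outExp a u) + Real.exp (outExp b u)) := by
  rw [hF _ hm a (Finset.mem_insert_self a {b}), Finset.sum_pair (menu_pair_ne hm)]

theorem fwd_half {a b : Act n C} (hm : IsMenu ({a, b} : Finset (Act n C)))
    (he : outExp a u = outExp b u) : ρ.prob a ({a, b} : Finset (Act n C)) = 1 / 2 := by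
  rw [pair_formula hF hm, he]
  have h := Real.exp_pos (outExp b u)
  field_simp
  ring

theorem fwd_ne_half {a b : Act n C} (hm : IsMenu ({a, b} : Finset (Act n C)))
    (he : outExp a u ≠ outExp b u) : ρ.prob a ({a, b} : Finset (Act n C)) ≠ 1 / 2 := by
  rw [pair_formula hF hm]
  intro h
  apply he
  have ha := Real.exp_pos (outExp a u)
  have hb := Real.exp_pos (outExp b u)
  rw [div_eq_iff (by positivity)] at h
  have h2 : Real.exp (outExp a u) = Real.exp (outExp b u) := by linarith
  exact Real.exp_injective h2

omit hF

theorem margP_last_cond (a : Act n C) (c : ℝ) :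
    margP a ({Fin.last (n+1)} : Finset (Node n)) (fun _ => c)
      = ∑ z ∈ a.mass.support.filter (fun z => z (Fin.last n) = c), a.mass z := by
  rw [margP]
  congr 1
  apply Finset.filter_congr
  intro z _
  constructor
  · intro h
    exact h (Fin.last n) (by rw [Fin.succ_last]; exact Finset.mem_singleton_self _)
  · intro h j hj
    rw [Finset.mem_singleton, ← Fin.succ_last] at hj
    have hj' : j = Fin.last n := Fin.succ_injective _ hj
    rw [hj']
    exact h

theorem outExp_eq_margP_sum (a : Act n C) (f : ℝ → ℝ) (T : Finset ℝ)
    (hT : ∀ z ∈ a.mass.support, z (Fin.last n) ∈ T) :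
    outExp a f = ∑ c ∈ T, f c * margP a ({Fin.last (n+1)} : Finset (Node n)) (fun _ => c) := by
  rw [outExp, Finsupp.sum,
    ← Finset.sum_fiberwise_of_maps_to hT (fun y => a.mass y * f (y (Fin.last n)))]
  apply Finset.sum_congr rfl
  intro c _
  rw [margP_last_cond, Finset.mul_sum]
  apply Finset.sum_congr rfl
  intro z hz
  rw [(Finset.mem_filter.mp hz).2, mul_comm]

include hF

theorem fwd_separates_last : Separates ρ ({Fin.last (n+1)} : Finset (Node n)) := by
  intro a b hm hind
  apply fwd_half hF hm
  set T := (a.mass.support ∪ b.mass.support).image (fun z => z (Fin.last n)) with hT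
  rw [outExp_eq_margP_sum a u T
      (fun z hz => Finset.mem_image_of_mem _ (Finset.mem_union_left _ hz)),
    outExp_eq_margP_sum b u T
      (fun z hz => Finset.mem_image_of_mem _ (Finset.mem_union_right _ hz))]
  apply Finset.sum_congr rfl
  intro c _
  rw [hind.1 a (Finset.mem_insert_self _ _)
      b (Finset.mem_insert.mpr (Or.inr (Finset.mem_singleton_self _))) (fun _ => c)]

omit hF

/-! #### Dirac pairs -/

theorem dact_ne {c1 c2 : ℝ} (hc1 : c1 ∈ C) (hc2 : c2 ∈ C) (h : c1 ≠ c2) :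
    stdAct C n (ddist c1) (isDist_ddist hc1) ≠ stdAct C n (ddist c2) (isDist_ddist hc2) :=
  fun he => h (ddist_injective (stdAct_inj he))

theorem isMenu_dirac_pair {c1 c2 : ℝ} (hc1 : c1 ∈ C) (hc2 : c2 ∈ C) (h : c1 ≠ c2) :
    IsMenu ({stdAct C n (ddist c1) (isDist_ddist hc1),
      stdAct C n (ddist c2) (isDist_ddist hc2)} : Finset (Act n C)) := by
  apply isMenu_std
  · rw [Finset.card_pair (dact_ne hc1 hc2 h)]
  · intro a ha
    rcases Finset.mem_insert.mp ha with h' | h'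
    · exact ⟨_, _, h'⟩
    · exact ⟨_, _, Finset.mem_singleton.mp h'⟩

theorem mem_I_ne_last {I : Finset (Node n)} (hI : Fin.last (n+1) ∉ I) {j : Fin (n+1)}
    (hj : (j.succ : Node n) ∈ I) : j ≠ Fin.last n := by
  intro h
  subst h
  rw [Fin.succ_last] at hj
  exact hI hj

theorem margP_dirac_union {c : ℝ} (hc : c ∈ C) (I J : Finset (Node n)) (y : Vec n) :
    margP (stdAct C n (ddist c) (isDist_ddist hc)) (I ∪ J) y
      = margP (stdAct C n (ddist c) (isDist_ddist hc)) I y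
        * margP (stdAct C n (ddist c) (isDist_ddist hc)) J y := by
  rw [margP_dirac hc, margP_dirac hc, margP_dirac hc]
  by_cases h1 : ∀ j : Fin (n+1), (j.succ : Node n) ∈ I → evec n c j = y j
  · by_cases h2 : ∀ j : Fin (n+1), (j.succ : Node n) ∈ J → evec n c j = y j
    · rw [if_pos h1, if_pos h2, if_pos (fun j hj => by
        rcases Finset.mem_union.mp hj with h | h
        exacts [h1 j h, h2 j h])]
      norm_num
    · rw [if_neg h2, if_neg (fun hU => h2 (fun j hj => hU j (Finset.mem_union_right _ hj))),
        mul_zero]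
  · rw [if_neg h1, zero_mul,
      if_neg (fun hU => h1 (fun j hj => hU j (Finset.mem_union_left _ hj)))]

theorem dirac_indep {c1 c2 : ℝ} (hc1 : c1 ∈ C) (hc2 : c2 ∈ C) (I : Finset (Node n))
    (hI : Fin.last (n+1) ∉ I) :
    IndepWithin ({stdAct C n (ddist c1) (isDist_ddist hc1),
      stdAct C n (ddist c2) (isDist_ddist hc2)} : Finset (Act n C)) I (varNodes n \ I) := by
  have key : ∀ (c : ℝ) (hc : c ∈ C) (y : Vec n),
      margP (stdAct C n (ddist c) (isDist_ddist hc)) I y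
        = if (∀ j : Fin (n+1), (j.succ : Node n) ∈ I → (0:ℝ) = y j) then 1 else 0 := by
    intro c hc y
    rw [margP_dirac hc]
    congr 1
    apply propext
    apply forall_congr'
    intro j
    apply imp_congr_right
    intro hj
    rw [evec, if_neg (mem_I_ne_last hI hj)]
  constructor
  · intro a ha b hb y
    have hform : ∀ x ∈ ({stdAct C n (ddist c1) (isDist_ddist hc1),
        stdAct C n (ddist c2) (isDist_ddist hc2)} : Finset (Act n C)),
        margP x I y = if (∀ j : Fin (n+1), (j.succ : Node n) ∈ I → (0:ℝ) = y j)
          then 1 else 0 := by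
      intro x hx
      rcases Finset.mem_insert.mp hx with h' | h'
      · rw [h']; exact key c1 hc1 y
      · rw [Finset.mem_singleton.mp h']; exact key c2 hc2 y
    rw [hform a ha, hform b hb]
  · intro a ha y
    rcases Finset.mem_insert.mp ha with h' | h'
    · rw [h']; exact margP_dirac_union hc1 I _ y
    · rw [Finset.mem_singleton.mp h']; exact margP_dirac_union hc2 I _ y

theorem last_mem_varNodes : Fin.last (n+1) ∈ varNodes n := by
  rw [varNodes, Finset.mem_erase]
  exact ⟨by simp [Fin.ext_iff], Finset.mem_univ _⟩

include hF

theorem fwd_not_sep (hu2 : StrictMonoOn u C) {c1 c2 : ℝ} (hc1 : c1 ∈ C) (hc2 : c2 ∈ C)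
    (hne : c1 ≠ c2) {I : Finset (Node n)} (hI : Fin.last (n+1) ∉ I) : ¬ Separates ρ I := by
  intro hsep
  have h := hsep _ _ (isMenu_dirac_pair hc1 hc2 hne) (dirac_indep hc1 hc2 I hI)
  refine fwd_ne_half hF (isMenu_dirac_pair hc1 hc2 hne) ?_ h
  rw [outExp_dirac hc1, outExp_dirac hc2]
  exact fun he => hne (hu2.injOn hc1 hc2 he)

theorem fwd_minseps (hu2 : StrictMonoOn u C) (hC2 : ∃ x ∈ C, ∃ y ∈ C, x ≠ y) :
    MinSeps ρ = {({Fin.last (n+1)} : Finset (Node n))} := by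
  obtain ⟨c1, hc1, c2, hc2, hne⟩ := hC2
  ext I
  simp only [MinSeps, Set.mem_setOf_eq, Set.mem_singleton_iff]
  constructor
  · rintro ⟨hsub, hsep, hmin⟩
    have hlast : Fin.last (n+1) ∈ I := by
      by_contra h
      exact fwd_not_sep hF hu2 hc1 hc2 hne h hsep
    by_contra hne'
    exact hmin ({Fin.last (n+1)} : Finset (Node n))
      ((Finset.singleton_subset_iff.mpr hlast).ssubset_of_ne (fun h => hne' h.symm))
      (fwd_separates_last hF)
  · rintro rfl
    refine ⟨Finset.singleton_subset_iff.mpr last_mem_varNodes, fwd_separates_last hF, ?_⟩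
    intro J hJ
    rw [Finset.eq_empty_of_ssubset_singleton hJ]
    exact fwd_not_sep hF hu2 hc1 hc2 hne (Finset.notMem_empty _)

omit hF

theorem outExp_mix (α : ℝ) (h0 : 0 ≤ α) (h1 : α ≤ 1) (p r : Act n C) (f : ℝ → ℝ) :
    outExp (mix α h0 h1 p r) f = α * outExp p f + (1 - α) * outExp r f := by
  show ((α • p.mass + (1 - α) • r.mass).sum fun y w => w * f (y (Fin.last n))) = _
  rw [Finsupp.sum_add_index' (fun y => zero_mul (f (y (Fin.last n))))
      (fun y m₁ m₂ => add_mul m₁ m₂ (f (y (Fin.last n)))),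
    Finsupp.sum_smul_index (fun y => zero_mul (f (y (Fin.last n)))),
    Finsupp.sum_smul_index (fun y => zero_mul (f (y (Fin.last n))))]
  have h1' : (p.mass.sum fun y c => α * c * f (y (Fin.last n))) = α * outExp p f := by
    rw [outExp, Finsupp.mul_sum]
    apply Finsupp.sum_congr
    intro y _
    ring
  have h2' : (r.mass.sum fun y c => (1 - α) * c * f (y (Fin.last n))) = (1 - α) * outExp r f := by
    rw [outExp, Finsupp.mul_sum]
    apply Finsupp.sum_congr
    intro y _
    ring
  rw [h1', h2']

include hF

theorem fwd_cpind {m : ℕ} (A : Fin (m + 1) → Finset (Node n)) : AxiomCPInd ρ A := by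
  intro α β hα0 hα1 hβ0 hβ1 p r hm1 _ hm2 _
  have hmem1 : r ∈ ({mix α hα0.le hα1.le p r, r} : Finset (Act n C)) :=
    Finset.mem_insert.mpr (Or.inr (Finset.mem_singleton_self _))
  have hmem2 : r ∈ ({mix β hβ0.le hβ1.le p r, r} : Finset (Act n C)) :=
    Finset.mem_insert.mpr (Or.inr (Finset.mem_singleton_self _))
  rw [fwd_ratio hF hm1 (Finset.mem_insert_self _ _) hmem1,
    fwd_ratio hF hm2 (Finset.mem_insert_self _ _) hmem2,
    Real.log_exp, Real.log_exp, outExp_mix, outExp_mix]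
  ring

end Forward

/-! #### Strict FOSD implies strictly higher expected utility -/

theorem fosd_outExp_lt {u : ℝ → ℝ} (hu2 : StrictMonoOn u C) {p q : Act n C}
    (hf : StrictFOSD p q) : outExp q u < outExp p u := by
  classical
  set T := (p.mass.support ∪ q.mass.support).image (fun z => z (Fin.last n)) with hTdef
  have hTC : ∀ t ∈ T, t ∈ C := by
    intro t ht
    obtain ⟨z, hz, rfl⟩ := Finset.mem_image.mp ht
    rcases Finset.mem_union.mp hz with h | h
    exacts [p.outC z h, q.outC z h]
  set k := T.card with hk
  set osf := T.orderIsoOfFin rfl with hosf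
  set c : ℕ → ℝ := fun i => if h : i < k then (osf ⟨i, h⟩ : ℝ) else 0 with hc
  have hc_mem : ∀ i, ∀ h : i < k, c i ∈ T := by
    intro i h
    simp only [hc, dif_pos h]
    exact (osf ⟨i, h⟩).2
  have hc_mono : ∀ i j, ∀ _ : i < k, ∀ _ : j < k, i < j → c i < c j := by
    intro i j hi hj hij
    simp only [hc, dif_pos hi, dif_pos hj]
    exact Subtype.coe_lt_coe.mpr (osf.strictMono (Fin.mk_lt_mk.mpr hij))
  have hc_le : ∀ i j, j < k → i ≤ j → c i ≤ c j := by
    intro i j hj hij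
    rcases eq_or_lt_of_le hij with rfl | h
    · exact le_refl _
    · exact (hc_mono i j (lt_trans h hj) hj h).le
  have hc_surj : ∀ t ∈ T, ∃ i, ∃ _ : i < k, c i = t := by
    intro t ht
    refine ⟨(osf.symm ⟨t, ht⟩ : Fin k).1, (osf.symm ⟨t, ht⟩).isLt, ?_⟩
    have he : (⟨(osf.symm ⟨t, ht⟩ : Fin k).1, (osf.symm ⟨t, ht⟩).isLt⟩ : Fin k)
        = osf.symm ⟨t, ht⟩ := Fin.eta _ _
    simp only [hc]
    rw [dif_pos (osf.symm ⟨t, ht⟩).isLt, he, OrderIso.apply_symm_apply]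
  set mP : Act n C → ℝ → ℝ :=
    fun a t => margP a ({Fin.last (n+1)} : Finset (Node n)) (fun _ => t) with hmP
  have sum_reindex : ∀ g : ℝ → ℝ, ∑ t ∈ T, g t = ∑ i ∈ Finset.range k, g (c i) := by
    intro g
    rw [← Finset.sum_coe_sort T g, ← Equiv.sum_comp osf.toEquiv (fun t : T => g t),
      ← Fin.sum_univ_eq_sum_range (fun i => g (c i)) k]
    apply Finset.sum_congr rfl
    intro j _
    have he : (⟨j.1, j.isLt⟩ : Fin k) = j := Fin.eta _ _
    simp only [hc, dif_pos j.isLt, he]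
    rw [dif_pos (show (j : ℕ) < k from j.isLt)]; rfl
  have hsub_p : p.mass.support ⊆ p.mass.support ∪ q.mass.support := Finset.subset_union_left
  have hsub_q : q.mass.support ⊆ p.mass.support ∪ q.mass.support := Finset.subset_union_right
  have hm_sumT : ∀ a : Act n C, a.mass.support ⊆ p.mass.support ∪ q.mass.support →
      ∑ t ∈ T, mP a t = 1 := by
    intro a ha
    have hmaps : ∀ z ∈ a.mass.support, z (Fin.last n) ∈ T :=
      fun z hz => Finset.mem_image_of_mem _ (ha hz)
    have h1 := Finset.sum_fiberwise_of_maps_to hmaps (fun z => a.mass z)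
    have h2 : ∀ t ∈ T, mP a t
        = ∑ z ∈ a.mass.support.filter (fun z => z (Fin.last n) = t), a.mass z := by
      intro t _
      exact margP_last_cond a t
    calc ∑ t ∈ T, mP a t
        = ∑ t ∈ T, ∑ z ∈ a.mass.support.filter (fun z => z (Fin.last n) = t), a.mass z :=
          Finset.sum_congr rfl h2
      _ = ∑ z ∈ a.mass.support, a.mass z := h1
      _ = 1 := a.total
  have hcdf : ∀ a : Act n C, a.mass.support ⊆ p.mass.support ∪ q.mass.support → ∀ t : ℝ,
      outCDF a t = ∑ s ∈ T.filter (fun s => s ≤ t), mP a s := by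
    intro a ha t
    rw [outCDF, ← Finset.sum_fiberwise_of_maps_to (t := T.filter (fun s => s ≤ t))
      (g := fun z => z (Fin.last n))
      (fun z hz => Finset.mem_filter.mpr
        ⟨Finset.mem_image_of_mem _ (ha (Finset.mem_filter.mp hz).1),
          (Finset.mem_filter.mp hz).2⟩) (fun z => a.mass z)]
    apply Finset.sum_congr rfl
    intro s hs
    have hst := (Finset.mem_filter.mp hs).2
    rw [hmP]
    simp only
    rw [margP_last_cond, Finset.filter_filter]
    refine Finset.sum_congr (Finset.filter_congr ?_) (fun _ _ => rfl)
    intro z _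
    constructor
    · rintro ⟨_, h2⟩; exact h2
    · intro h2; exact ⟨by rw [h2]; exact hst, h2⟩
  have hESum : ∀ a : Act n C, a.mass.support ⊆ p.mass.support ∪ q.mass.support →
      outExp a u = ∑ i ∈ Finset.range k, u (c i) * mP a (c i) := by
    intro a ha
    rw [outExp_eq_margP_sum a u T (fun z hz => Finset.mem_image_of_mem _ (ha hz)),
      sum_reindex]
  set d : ℕ → ℝ := fun i => mP p (c i) - mP q (c i) with hd
  set Sp : ℕ → ℝ := fun i => ∑ j ∈ Finset.range (i+1), d j with hSp
  have hdtot : ∑ j ∈ Finset.range k, d j = 0 := by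
    have h1 : ∑ j ∈ Finset.range k, mP p (c j) = 1 := by
      rw [← sum_reindex (mP p)]; exact hm_sumT p hsub_p
    have h2 : ∑ j ∈ Finset.range k, mP q (c j) = 1 := by
      rw [← sum_reindex (mP q)]; exact hm_sumT q hsub_q
    simp only [hd, Finset.sum_sub_distrib, h1, h2, sub_self]
  have hfilter_eq : ∀ i, i < k → ∀ g : ℝ → ℝ,
      ∑ s ∈ T.filter (fun s => s ≤ c i), g s = ∑ j ∈ Finset.range (i+1), g (c j) := by
    intro i hi g
    refine (Finset.sum_bij (fun j hj => c j) ?_ ?_ ?_ ?_).symm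
    · intro j hj
      have hji : j ≤ i := by have := Finset.mem_range.mp hj; omega
      have hjk : j < k := lt_of_le_of_lt hji hi
      exact Finset.mem_filter.mpr ⟨hc_mem j hjk, hc_le j i hi hji⟩
    · intro j1 h1 j2 h2 hcc
      have hj1 : j1 < k := lt_of_lt_of_le (Finset.mem_range.mp h1) hi
      have hj2 : j2 < k := lt_of_lt_of_le (Finset.mem_range.mp h2) hi
      by_contra hne
      rcases Nat.lt_or_ge j1 j2 with h | h
      · exact absurd hcc (hc_mono j1 j2 hj1 hj2 h).ne
      · have : j2 < j1 := by omega
        exact absurd hcc.symm (hc_mono j2 j1 hj2 hj1 this).ne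
    · intro s hs
      obtain ⟨hsT, hsle⟩ := Finset.mem_filter.mp hs
      obtain ⟨j, hjk, rfl⟩ := hc_surj s hsT
      refine ⟨j, Finset.mem_range.mpr ?_, rfl⟩
      by_contra hgt
      have hij : i < j := by omega
      exact absurd (hc_mono i j hi hjk hij) (not_lt.mpr hsle)
    · intro j hj
      rfl
  have hS_eq : ∀ i, i < k → Sp i = outCDF p (c i) - outCDF q (c i) := by
    intro i hi
    rw [hcdf p hsub_p (c i), hcdf q hsub_q (c i), hfilter_eq i hi (mP p),
      hfilter_eq i hi (mP q)]
    simp only [hSp, hd, Finset.sum_sub_distrib]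
  have habel := Finset.sum_range_by_parts (fun i => u (c i)) d k
  have hkpos : 0 < k := by
    rw [hk]
    rw [Finset.card_pos]
    exact (p.support_nonempty.image _).mono
      (Finset.image_subset_image Finset.subset_union_left)
  have hEdiff : outExp p u - outExp q u
      = ∑ i ∈ Finset.range (k-1), (u (c (i+1)) - u (c i)) * (- Sp i) := by
    have h0 : outExp p u - outExp q u = ∑ i ∈ Finset.range k, u (c i) * d i := by
      rw [hESum p hsub_p, hESum q hsub_q]
      simp only [hd, Finset.sum_sub_distrib, mul_sub]
    rw [h0]
    have habel' : ∑ i ∈ Finset.range k, u (c i) * d i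
        = u (c (k-1)) * (∑ j ∈ Finset.range k, d j)
          - ∑ i ∈ Finset.range (k-1), (u (c (i+1)) - u (c i)) * Sp i := by
      simpa only [smul_eq_mul, hSp] using habel
    rw [habel', hdtot, mul_zero, zero_sub, ← Finset.sum_neg_distrib]
    apply Finset.sum_congr rfl
    intro i _
    ring
  have hterm_nonneg : ∀ i ∈ Finset.range (k-1), 0 ≤ (u (c (i+1)) - u (c i)) * (- Sp i) := by
    intro i hi
    have hik : i + 1 < k := by have := Finset.mem_range.mp hi; omega
    have hikk : i < k := by omega
    have hlt : c i < c (i+1) := hc_mono i (i+1) hikk hik (by omega)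
    have humono : u (c i) ≤ u (c (i+1)) :=
      (hu2 (hTC _ (hc_mem i hikk)) (hTC _ (hc_mem (i+1) hik)) hlt).le
    have hSle : Sp i ≤ 0 := by
      rw [hS_eq i hikk]
      have := hf.1 (c i)
      linarith
    nlinarith
  obtain ⟨t, hplt⟩ := hf.2
  set A := (Finset.range k).filter (fun i => c i ≤ t) with hA
  have hAne : A.Nonempty := by
    by_contra hAe
    rw [Finset.not_nonempty_iff_eq_empty] at hAe
    have hempty : T.filter (fun s => s ≤ t) = ∅ := by
      rw [Finset.filter_eq_empty_iff]
      intro s hs hle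
      obtain ⟨i, hik, rfl⟩ := hc_surj s hs
      have : i ∈ A := Finset.mem_filter.mpr ⟨Finset.mem_range.mpr hik, hle⟩
      rw [hAe] at this
      exact Finset.notMem_empty _ this
    rw [hcdf p hsub_p t, hcdf q hsub_q t, hempty, Finset.sum_empty] at hplt
    exact lt_irrefl 0 hplt
  set i0 := A.max' hAne with hi0
  have hi0A : i0 ∈ A := A.max'_mem hAne
  have hi0k : i0 < k := Finset.mem_range.mp (Finset.mem_filter.mp hi0A).1
  have hi0le : c i0 ≤ t := (Finset.mem_filter.mp hi0A).2
  have hi0top : i0 < k - 1 := by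
    by_contra hcon
    have hi0eq : i0 = k - 1 := by omega
    have hallle : ∀ s ∈ T, s ≤ t := by
      intro s hs
      obtain ⟨i, hik, rfl⟩ := hc_surj s hs
      have hle : c i ≤ c i0 := hc_le i i0 hi0k (by omega)
      linarith
    have hfT : T.filter (fun s => s ≤ t) = T := Finset.filter_true_of_mem hallle
    rw [hcdf p hsub_p t, hcdf q hsub_q t, hfT, hm_sumT p hsub_p, hm_sumT q hsub_q] at hplt
    exact lt_irrefl 1 hplt
  have hnext : t < c (i0+1) := by
    by_contra hcon
    push_neg at hcon
    have hmem : i0 + 1 ∈ A :=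
      Finset.mem_filter.mpr ⟨Finset.mem_range.mpr (by omega), hcon⟩
    have := A.le_max' _ hmem
    omega
  have hfilter_t : T.filter (fun s => s ≤ t) = T.filter (fun s => s ≤ c i0) := by
    apply Finset.filter_congr
    intro s hs
    constructor
    · intro hle
      obtain ⟨i, hik, rfl⟩ := hc_surj s hs
      have hiA : i ∈ A := Finset.mem_filter.mpr ⟨Finset.mem_range.mpr hik, hle⟩
      exact hc_le i i0 hi0k (A.le_max' _ hiA)
    · intro hle
      exact le_trans hle hi0le
  have hSneg : Sp i0 < 0 := by
    rw [hS_eq i0 hi0k, hcdf p hsub_p (c i0), hcdf q hsub_q (c i0), ← hfilter_t,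
      ← hcdf p hsub_p t, ← hcdf q hsub_q t]
    linarith
  have hterm_pos : 0 < (u (c (i0+1)) - u (c i0)) * (- Sp i0) := by
    have hik : i0 + 1 < k := by omega
    have hlt : c i0 < c (i0+1) := hc_mono i0 (i0+1) hi0k hik (by omega)
    have humono : u (c i0) < u (c (i0+1)) :=
      hu2 (hTC _ (hc_mem i0 hi0k)) (hTC _ (hc_mem (i0+1) hik)) hlt
    nlinarith
  have hsum_pos : 0 < ∑ i ∈ Finset.range (k-1), (u (c (i+1)) - u (c i)) * (- Sp i) :=
    Finset.sum_pos' hterm_nonneg ⟨i0, Finset.mem_range.mpr hi0top, hterm_pos⟩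
  linarith [hEdiff, hsum_pos]

/-! #### Forward direction: remaining axioms -/

section Forward2

variable {ρ : RCR n C} {u : ℝ → ℝ}

variable (hF : ∀ S : Finset (Act n C), IsMenu S → ∀ a ∈ S,
  ρ.prob a S = Real.exp (outExp a u) / ∑ b ∈ S, Real.exp (outExp b u))

include hF

theorem fwd_cpdom (hu2 : StrictMonoOn u C) {m : ℕ} (A : Fin (m + 1) → Finset (Node n)) :
    AxiomCPDom ρ A := by
  intro p q hm _ hfosd
  have hEU : outExp q u < outExp p u := fosd_outExp_lt hu2 hfosd
  rw [pair_formula hF hm]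
  have ha := Real.exp_pos (outExp p u)
  have hb := Real.exp_pos (outExp q u)
  have hlt : Real.exp (outExp q u) < Real.exp (outExp p u) := Real.exp_lt_exp.mpr hEU
  rw [lt_div_iff₀ (by positivity)]
  linarith

theorem fwd_cpcont (hu1 : ContinuousOn u C) (hC : IsCompact C) {m : ℕ}
    (A : Fin (m + 1) → Finset (Node n)) : AxiomCPCont ρ A := by
  obtain ⟨g, hg⟩ := ContinuousMap.exists_restrict_eq (X := ℝ) hC.isClosed
    ⟨C.restrict u, hu1.restrict⟩
  have hgC : ∀ c ∈ C, g c = u c := by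
    intro c hc
    have := DFunLike.congr_fun hg (⟨c, hc⟩ : C)
    simp at this; exact this
  have hEg : ∀ a : Act n C, outExp a u = outExp a g := by
    intro a
    apply Finsupp.sum_congr
    intro y hy
    rw [hgC _ (a.outC y hy)]
  intro S pk qk p q hS _ hmk _ hp hq hop hoq
  have hmemq : ∀ k', qk k' ∈ ({pk k', qk k'} : Finset (Act n C)) :=
    fun k' => Finset.mem_insert.mpr (Or.inr (Finset.mem_singleton_self _))
  have h1 : ∀ k', ρ.prob (qk k') ({pk k', qk k'} : Finset (Act n C))
      / ρ.prob (pk k') ({pk k', qk k'} : Finset (Act n C))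
      = Real.exp (outExp (qk k') g - outExp (pk k') g) := by
    intro k'
    rw [fwd_ratio hF (hmk k') (hmemq k') (Finset.mem_insert_self _ _), hEg, hEg]
  have h2 : ρ.prob q S / ρ.prob p S = Real.exp (outExp q g - outExp p g) := by
    rw [fwd_ratio hF hS hq hp, hEg, hEg]
  rw [h2]
  have h3 : Tendsto (fun k' => Real.exp (outExp (qk k') g - outExp (pk k') g)) atTop
      (nhds (Real.exp (outExp q g - outExp p g))) :=
    (Real.continuous_exp.tendsto _).comp ((hoq g g.continuous).sub (hop g g.continuous))
  exact Filter.Tendsto.congr (fun k' => (h1 k').symm) h3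

end Forward2

/-! #### Backward direction: setup -/

def A0 (n : ℕ) : Fin 1 → Finset (Node n) := fun _ => {Fin.last (n+1)}

theorem biUnion_A0 : Finset.univ.biUnion (A0 n) = ({Fin.last (n+1)} : Finset (Node n)) := by
  ext x
  rw [Finset.mem_biUnion]
  constructor
  · rintro ⟨i, _, h⟩; exact h
  · intro h; exact ⟨0, Finset.mem_univ _, h⟩

theorem cp_trivial (ρ : RCR n C) (S : Finset (Act n C)) : CorrectlyPerceived ρ (A0 n) S := by
  intro a _ b _ y _
  have h1 : (∏ i : Fin 0, acond a ((A0 n) i.succ \ (A0 n) i.castSucc) ((A0 n) i.castSucc) y)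
      = 1 := by
    simp
  rw [h1, mul_one, biUnion_A0]
  rfl

theorem sepOrdering_A0 (ρ : RCR n C)
    (hms : MinSeps ρ = {({Fin.last (n+1)} : Finset (Node n))}) :
    IsSepOrdering ρ (A0 n) := by
  refine ⟨fun a b _ => by
    have h1 := a.isLt
    have h2 := b.isLt
    exact Fin.ext (by omega), ?_, ?_, rfl, fun i => i.elim0⟩
  · intro i
    rw [hms]
    exact Set.mem_singleton _
  · intro B hB
    rw [hms] at hB
    exact ⟨0, (Set.eq_of_mem_singleton hB).symm⟩

section Backward

variable {ρ : RCR n C}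

theorem pair_sum {a b : Act n C} (hm : IsMenu ({a, b} : Finset (Act n C))) :
    ρ.prob a ({a, b} : Finset (Act n C)) + ρ.prob b ({a, b} : Finset (Act n C)) = 1 := by
  have h := ρ.sum_one _ hm
  rwa [Finset.sum_pair (menu_pair_ne hm)] at h

theorem binary_reduction (hcont : AxiomCPCont ρ (A0 n)) {S : Finset (Act n C)} (hS : IsMenu S)
    {p q : Act n C} (hp : p ∈ S) (hq : q ∈ S) (hne : p ≠ q) :
    ρ.prob q ({p, q} : Finset (Act n C)) / ρ.prob p ({p, q} : Finset (Act n C))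
      = ρ.prob q S / ρ.prob p S := by
  have hm := isMenu_pair_of_mem hS hp hq hne
  have h := hcont S (fun _ => p) (fun _ => q) p q hS (cp_trivial ρ S) (fun _ => hm)
    (fun _ => cp_trivial ρ _) hp hq (fun f _ => tendsto_const_nhds)
    (fun f _ => tendsto_const_nhds)
  exact tendsto_nhds_unique tendsto_const_nhds h

/-- The odds of `μ` against `ν` among standard acts. -/
noncomputable def Gq (ρ : RCR n C) (ν μ : ℝ →₀ ℝ) (hν : IsDist C ν) (hμ : IsDist C μ) : ℝ :=
  ρ.prob (stdAct C n μ hμ) {stdAct C n ν hν, stdAct C n μ hμ}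
    / ρ.prob (stdAct C n ν hν) {stdAct C n ν hν, stdAct C n μ hμ}

/-- The log-odds against the reference Dirac distribution at `c1`. -/
noncomputable def Wf (ρ : RCR n C) (c1 : ℝ) (ν : ℝ →₀ ℝ) : ℝ :=
  if h : IsDist C ν ∧ c1 ∈ C ∧ ν ≠ ddist c1 then
    Real.log (Gq ρ (ddist c1) ν (isDist_ddist h.2.1) h.1)
  else 0

/-- The utility function. -/
noncomputable def uf (ρ : RCR n C) (c1 : ℝ) : ℝ → ℝ := fun c => Wf ρ c1 (ddist c)

theorem Wf_ddist_base {c1 : ℝ} : Wf ρ c1 (ddist c1) = 0 := by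
  rw [Wf, dif_neg]
  rintro ⟨-, -, h⟩
  exact h rfl

theorem isMenu_std_pair {ν μ : ℝ →₀ ℝ} (hν : IsDist C ν) (hμ : IsDist C μ) (hne : ν ≠ μ) :
    IsMenu ({stdAct C n ν hν, stdAct C n μ hμ} : Finset (Act n C)) := by
  apply isMenu_std
  · rw [Finset.card_pair (fun h => hne (stdAct_inj h))]
  · intro a ha
    rcases Finset.mem_insert.mp ha with h' | h'
    · exact ⟨_, _, h'⟩
    · exact ⟨_, _, Finset.mem_singleton.mp h'⟩

variable (hfs : AxiomFullSupport ρ)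

include hfs

theorem Gq_pos {ν μ : ℝ →₀ ℝ} (hν : IsDist C ν) (hμ : IsDist C μ) (hne : ν ≠ μ) :
    0 < Gq ρ ν μ hν hμ := by
  have hm := isMenu_std_pair (n := n) hν hμ hne
  exact div_pos
    (hfs _ hm _ (Finset.mem_insert.mpr (Or.inr (Finset.mem_singleton_self _))))
    (hfs _ hm _ (Finset.mem_insert_self _ _))

theorem Gq_inv {ν μ : ℝ →₀ ℝ} (hν : IsDist C ν) (hμ : IsDist C μ) (hne : ν ≠ μ) :
    Gq ρ ν μ hν hμ * Gq ρ μ ν hμ hν = 1 := by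
  have hm := isMenu_std_pair (n := n) hν hμ hne
  have hA := hfs _ hm _ (Finset.mem_insert_self _ _)
  have hB := hfs _ hm _ (Finset.mem_insert.mpr (Or.inr (Finset.mem_singleton_self _)))
  rw [Gq, Gq, Finset.pair_comm (stdAct C n μ hμ) (stdAct C n ν hν)]
  field_simp

theorem Gq_chain (hcont : AxiomCPCont ρ (A0 n)) {ν μ κ : ℝ →₀ ℝ}
    (hν : IsDist C ν) (hμ : IsDist C μ) (hκ : IsDist C κ)
    (h1 : ν ≠ μ) (h2 : μ ≠ κ) (h3 : ν ≠ κ) :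
    Gq ρ ν μ hν hμ * Gq ρ μ κ hμ hκ = Gq ρ ν κ hν hκ := by
  set S : Finset (Act n C) :=
    {stdAct C n ν hν, stdAct C n μ hμ, stdAct C n κ hκ} with hSdef
  have hSmenu : IsMenu S := by
    apply isMenu_std
    · calc 2 = ({stdAct C n μ hμ, stdAct C n κ hκ} : Finset (Act n C)).card :=
            (Finset.card_pair (fun h => h2 (stdAct_inj h))).symm
        _ ≤ S.card := Finset.card_le_card (Finset.subset_insert _ _)
    · intro a ha
      rcases Finset.mem_insert.mp ha with h' | h'
      · exact ⟨_, _, h'⟩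
      rcases Finset.mem_insert.mp h' with h'' | h''
      · exact ⟨_, _, h''⟩
      · exact ⟨_, _, Finset.mem_singleton.mp h''⟩
  have hν_mem : stdAct C n ν hν ∈ S := Finset.mem_insert_self _ _
  have hμ_mem : stdAct C n μ hμ ∈ S :=
    Finset.mem_insert.mpr (Or.inr (Finset.mem_insert_self _ _))
  have hκ_mem : stdAct C n κ hκ ∈ S :=
    Finset.mem_insert.mpr (Or.inr (Finset.mem_insert.mpr
      (Or.inr (Finset.mem_singleton_self _))))
  have e1 : Gq ρ ν μ hν hμ
      = ρ.prob (stdAct C n μ hμ) S / ρ.prob (stdAct C n ν hν) S :=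
    binary_reduction hcont hSmenu hν_mem hμ_mem (fun h => h1 (stdAct_inj h))
  have e2 : Gq ρ μ κ hμ hκ
      = ρ.prob (stdAct C n κ hκ) S / ρ.prob (stdAct C n μ hμ) S :=
    binary_reduction hcont hSmenu hμ_mem hκ_mem (fun h => h2 (stdAct_inj h))
  have e3 : Gq ρ ν κ hν hκ
      = ρ.prob (stdAct C n κ hκ) S / ρ.prob (stdAct C n ν hν) S :=
    binary_reduction hcont hSmenu hν_mem hκ_mem (fun h => h3 (stdAct_inj h))
  rw [e1, e2, e3]
  have hA := (hfs S hSmenu _ hν_mem).ne'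
  have hB := (hfs S hSmenu _ hμ_mem).ne'
  field_simp

theorem Gq_exp_Wf {c1 : ℝ} (hc1 : c1 ∈ C) (hcont : AxiomCPCont ρ (A0 n)) {ν μ : ℝ →₀ ℝ}
    (hν : IsDist C ν) (hμ : IsDist C μ) (hne : ν ≠ μ) :
    Gq ρ ν μ hν hμ = Real.exp (Wf ρ c1 μ - Wf ρ c1 ν) := by
  have hWG : ∀ (κ : ℝ →₀ ℝ) (hκ : IsDist C κ) (hκ1 : κ ≠ ddist c1),
      Gq ρ (ddist c1) κ (isDist_ddist hc1) hκ = Real.exp (Wf ρ c1 κ) := by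
    intro κ hκ hκ1
    rw [Wf, dif_pos ⟨hκ, hc1, hκ1⟩, Real.exp_log (Gq_pos hfs _ _ (Ne.symm hκ1))]
  by_cases hν1 : ν = ddist c1
  · subst hν1
    rw [hWG μ hμ (Ne.symm hne), Wf_ddist_base, sub_zero]
  · by_cases hμ1 : μ = ddist c1
    · subst hμ1
      have hμe : hμ = isDist_ddist hc1 := Subsingleton.elim _ _
      subst hμe
      have hinv := Gq_inv hfs (isDist_ddist hc1) hν (Ne.symm hν1)
      have hG := hWG ν hν hν1
      rw [Wf_ddist_base, zero_sub, Real.exp_neg, ← hG]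
      have hpos := Gq_pos hfs (isDist_ddist hc1) hν (Ne.symm hν1)
      rw [inv_eq_one_div, eq_div_iff hpos.ne']
      rw [mul_comm]
      exact hinv
    · have hchain := Gq_chain hfs hcont (isDist_ddist hc1) hν hμ
        (Ne.symm hν1) hne (Ne.symm hμ1)
      have hGν := hWG ν hν hν1
      have hGμ := hWG μ hμ hμ1
      have hpos := Gq_pos hfs (isDist_ddist hc1) hν (Ne.symm hν1)
      rw [hGν, hGμ] at hchain
      rw [Real.exp_sub, ← hchain, mul_comm, mul_div_assoc,
        div_self (Real.exp_ne_zero _), mul_one]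

end Backward

section Backward2

variable {ρ : RCR n C} {c1 : ℝ}

theorem mixdist_self (α : ℝ) (ν : ℝ →₀ ℝ) : α • ν + (1 - α) • ν = ν := by
  ext c
  rw [mixdist_apply]
  ring

theorem outExp_stdAct_mixdist (γ : ℝ) (h0 : 0 ≤ γ) (h1 : γ ≤ 1) (ν μ : ℝ →₀ ℝ)
    (hν : IsDist C ν) (hμ : IsDist C μ) (f : ℝ → ℝ) :
    outExp (stdAct C n (γ • ν + (1 - γ) • μ) (isDist_mixdist hν hμ h0 h1)) f
      = γ * outExp (stdAct C n ν hν) f + (1 - γ) * outExp (stdAct C n μ hμ) f := by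
  rw [← mix_stdAct γ h0 h1 ν μ hν hμ, outExp_mix]

theorem tendsto_alphaseq : Tendsto (fun k : ℕ => 1 - 1/((k:ℝ)+2)) atTop (nhds 1) := by
  have h1 : Tendsto (fun k : ℕ => ((k:ℝ)+2)) atTop atTop :=
    tendsto_atTop_add_const_right _ 2 tendsto_natCast_atTop_atTop
  have h2 : Tendsto (fun k : ℕ => 1/((k:ℝ)+2)) atTop (nhds 0) := by
    simpa [one_div, Pi.inv_def] using h1.inv_tendsto_atTop
  have h3 := (tendsto_const_nhds (x := (1:ℝ)) (f := (atTop : Filter ℕ))).sub h2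
  simpa using h3

theorem alphaseq_mem (k : ℕ) : 0 < 1 - 1/((k:ℝ)+2) ∧ 1 - 1/((k:ℝ)+2) < 1 := by
  have hk : (0:ℝ) ≤ (k:ℝ) := Nat.cast_nonneg k
  constructor
  · have h : 1/((k:ℝ)+2) < 1 := by
      rw [div_lt_one (by linarith)]
      linarith
    linarith
  · have h : 0 < 1/((k:ℝ)+2) := by positivity
    linarith

theorem Wf_linear (hfs : AxiomFullSupport ρ) (hcont : AxiomCPCont ρ (A0 n))
    (hind : AxiomCPInd ρ (A0 n)) (hc1 : c1 ∈ C) {ν μ : ℝ →₀ ℝ}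
    (hν : IsDist C ν) (hμ : IsDist C μ) {α : ℝ} (hα0 : 0 < α) (hα1 : α < 1) :
    Wf ρ c1 (α • ν + (1 - α) • μ) = α * Wf ρ c1 ν + (1 - α) * Wf ρ c1 μ := by
  by_cases hνμ : ν = μ
  · subst hνμ
    rw [mixdist_self]
    ring
  have hmixne : ∀ γ : ℝ, 0 < γ → γ • ν + (1 - γ) • μ ≠ μ := fun γ h => mixdist_ne hνμ h
  have hlog : ∀ (γ : ℝ) (hγ0 : 0 < γ) (hγ1 : γ < 1),
      Real.log (ρ.prob (stdAct C n (γ • ν + (1 - γ) • μ) (isDist_mixdist hν hμ hγ0.le hγ1.le))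
          {stdAct C n (γ • ν + (1 - γ) • μ) (isDist_mixdist hν hμ hγ0.le hγ1.le),
            stdAct C n μ hμ}
        / ρ.prob (stdAct C n μ hμ)
          {stdAct C n (γ • ν + (1 - γ) • μ) (isDist_mixdist hν hμ hγ0.le hγ1.le),
            stdAct C n μ hμ})
      = Wf ρ c1 (γ • ν + (1 - γ) • μ) - Wf ρ c1 μ := by
    intro γ hγ0 hγ1
    have hG : Gq ρ μ (γ • ν + (1 - γ) • μ) hμ (isDist_mixdist hν hμ hγ0.le hγ1.le)
        = Real.exp (Wf ρ c1 (γ • ν + (1 - γ) • μ) - Wf ρ c1 μ) :=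
      Gq_exp_Wf hfs hc1 hcont hμ _ (Ne.symm (hmixne γ hγ0))
    rw [Finset.pair_comm (stdAct C n (γ • ν + (1 - γ) • μ)
      (isDist_mixdist hν hμ hγ0.le hγ1.le)) (stdAct C n μ hμ)]
    show Real.log (Gq ρ μ (γ • ν + (1 - γ) • μ) hμ (isDist_mixdist hν hμ hγ0.le hγ1.le)) = _
    rw [hG, Real.log_exp]
  have hbase : ∀ (a b : ℝ) (ha0 : 0 < a) (ha1 : a < 1) (hb0 : 0 < b) (hb1 : b < 1),
      b * (Wf ρ c1 (a • ν + (1 - a) • μ) - Wf ρ c1 μ)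
        = a * (Wf ρ c1 (b • ν + (1 - b) • μ) - Wf ρ c1 μ) := by
    intro a b ha0 ha1 hb0 hb1
    have hmenua : IsMenu ({mix a ha0.le ha1.le (stdAct C n ν hν) (stdAct C n μ hμ),
        stdAct C n μ hμ} : Finset (Act n C)) := by
      rw [mix_stdAct a ha0.le ha1.le ν μ hν hμ]
      exact isMenu_std_pair (n := n) (isDist_mixdist hν hμ ha0.le ha1.le) hμ (hmixne a ha0)
    have hmenub : IsMenu ({mix b hb0.le hb1.le (stdAct C n ν hν) (stdAct C n μ hμ),
        stdAct C n μ hμ} : Finset (Act n C)) := by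
      rw [mix_stdAct b hb0.le hb1.le ν μ hν hμ]
      exact isMenu_std_pair (n := n) (isDist_mixdist hν hμ hb0.le hb1.le) hμ (hmixne b hb0)
    have h := hind a b ha0 ha1 hb0 hb1 (stdAct C n ν hν) (stdAct C n μ hμ)
      hmenua (cp_trivial ρ _) hmenub (cp_trivial ρ _)
    rw [mix_stdAct a ha0.le ha1.le ν μ hν hμ, mix_stdAct b hb0.le hb1.le ν μ hν hμ,
      hlog a ha0 ha1, hlog b hb0 hb1] at h
    exact h
  set L := (Wf ρ c1 (α • ν + (1 - α) • μ) - Wf ρ c1 μ) / α with hLdef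
  have hF : ∀ (a : ℝ), 0 < a → a < 1 →
      Wf ρ c1 (a • ν + (1 - a) • μ) - Wf ρ c1 μ = a * L := by
    intro a ha0 ha1
    have h := hbase a α ha0 ha1 hα0 hα1
    rw [hLdef]
    field_simp
    linear_combination h
  set ak : ℕ → ℝ := fun k => 1 - 1/((k:ℝ)+2) with hak
  have hak0 : ∀ k, 0 < ak k := fun k => (alphaseq_mem k).1
  have hak1 : ∀ k, ak k < 1 := fun k => (alphaseq_mem k).2
  set qk : ℕ → Act n C := fun k =>
    stdAct C n (ak k • ν + (1 - ak k) • μ)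
      (isDist_mixdist hν hμ (hak0 k).le (hak1 k).le) with hqk
  have hmenus : ∀ k, IsMenu ({stdAct C n μ hμ, qk k} : Finset (Act n C)) :=
    fun k => isMenu_std_pair (n := n) hμ _ (Ne.symm (hmixne _ (hak0 k)))
  have hSmenu : IsMenu ({stdAct C n μ hμ, stdAct C n ν hν} : Finset (Act n C)) :=
    isMenu_std_pair (n := n) hμ hν (Ne.symm hνμ)
  have hOTq : OutTendsto qk (stdAct C n ν hν) := by
    intro f hf
    have hexp : ∀ k, outExp (qk k) f
        = ak k * outExp (stdAct C n ν hν) f + (1 - ak k) * outExp (stdAct C n μ hμ) f :=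
      fun k => outExp_stdAct_mixdist (ak k) (hak0 k).le (hak1 k).le ν μ hν hμ f
    have htend : Tendsto (fun k => ak k * outExp (stdAct C n ν hν) f
        + (1 - ak k) * outExp (stdAct C n μ hμ) f) atTop
        (nhds (outExp (stdAct C n ν hν) f)) := by
      have h1 : Tendsto ak atTop (nhds 1) := tendsto_alphaseq
      have h2 : Tendsto (fun k => (1:ℝ) - ak k) atTop (nhds (1 - 1)) :=
        (tendsto_const_nhds (x := (1:ℝ)) (f := (atTop : Filter ℕ))).sub h1
      rw [show (1:ℝ) - 1 = 0 from by norm_num] at h2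
      have h3 := (h1.mul_const (outExp (stdAct C n ν hν) f)).add
        (h2.mul_const (outExp (stdAct C n μ hμ) f))
      rw [one_mul, zero_mul, add_zero] at h3
      exact h3
    exact htend.congr (fun k => (hexp k).symm)
  have hconc := hcont {stdAct C n μ hμ, stdAct C n ν hν} (fun _ => stdAct C n μ hμ) qk
    (stdAct C n μ hμ) (stdAct C n ν hν) hSmenu (cp_trivial ρ _) hmenus
    (fun _ => cp_trivial ρ _) (Finset.mem_insert_self _ _)
    (Finset.mem_insert.mpr (Or.inr (Finset.mem_singleton_self _)))
    (fun f _ => tendsto_const_nhds) hOTq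
  have hterm : ∀ k, ρ.prob (qk k) ({stdAct C n μ hμ, qk k} : Finset (Act n C))
      / ρ.prob (stdAct C n μ hμ) ({stdAct C n μ hμ, qk k} : Finset (Act n C))
      = Real.exp (ak k * L) := by
    intro k
    have hG : Gq ρ μ (ak k • ν + (1 - ak k) • μ) hμ
        (isDist_mixdist hν hμ (hak0 k).le (hak1 k).le)
        = Real.exp (Wf ρ c1 (ak k • ν + (1 - ak k) • μ) - Wf ρ c1 μ) :=
      Gq_exp_Wf hfs hc1 hcont hμ _ (Ne.symm (hmixne _ (hak0 k)))
    rw [hF _ (hak0 k) (hak1 k)] at hG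
    exact hG
  have hlimit : Tendsto (fun k => Real.exp (ak k * L)) atTop (nhds (Real.exp L)) := by
    have h := (Real.continuous_exp.tendsto _).comp (tendsto_alphaseq.mul_const L)
    rw [one_mul] at h
    exact h
  have h1 := Filter.Tendsto.congr hterm hconc
  have h2 := tendsto_nhds_unique h1 hlimit
  have h3 : Gq ρ μ ν hμ hν = Real.exp L := h2
  rw [Gq_exp_Wf hfs hc1 hcont hμ hν (Ne.symm hνμ)] at h3
  have hLval : Wf ρ c1 ν - Wf ρ c1 μ = L := Real.exp_injective h3
  have h4 := hF α hα0 hα1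
  rw [← hLval] at h4
  linarith

end Backward2

section Backward3

variable {ρ : RCR n C} {c1 : ℝ}

theorem tendsto_tk : Tendsto (fun k : ℕ => 1/((k:ℝ)+2)) atTop (nhds 0) := by
  have h1 : Tendsto (fun k : ℕ => ((k:ℝ)+2)) atTop atTop :=
    tendsto_atTop_add_const_right _ 2 tendsto_natCast_atTop_atTop
  simpa [one_div, Pi.inv_def] using h1.inv_tendsto_atTop

theorem tkseq_mem (k : ℕ) : 0 < 1/((k:ℝ)+2) ∧ 1/((k:ℝ)+2) < 1 := by
  have h := alphaseq_mem k
  constructor <;> linarith [h.1, h.2]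

theorem menu_ratio (hfs : AxiomFullSupport ρ) (hcont : AxiomCPCont ρ (A0 n))
    (hind : AxiomCPInd ρ (A0 n)) (hc1 : c1 ∈ C) {c2 : ℝ} (hc2 : c2 ∈ C) (hne12 : c1 ≠ c2)
    {S : Finset (Act n C)} (hS : IsMenu S) {p q : Act n C} (hp : p ∈ S) (hq : q ∈ S) :
    ρ.prob q S / ρ.prob p S
      = Real.exp (Wf ρ c1 (outMarg q) - Wf ρ c1 (outMarg p)) := by
  by_cases hpq : p = q
  · subst hpq
    rw [sub_self, Real.exp_zero, div_self (hfs S hS p hp).ne']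
  have hdp : IsDist C (outMarg p) := isDist_outMarg p
  have hdq : IsDist C (outMarg q) := isDist_outMarg q
  have hot_p : OutTendsto (fun _ : ℕ => stdAct C n (outMarg p) hdp) p := by
    intro f _
    have h2 : outExp (stdAct C n (outMarg p) hdp) f = outExp p f :=
      outExp_stdAct_outMarg p f
    rw [← h2]
    exact tendsto_const_nhds
  have hot_q : OutTendsto (fun _ : ℕ => stdAct C n (outMarg q) hdq) q := by
    intro f _
    have h2 : outExp (stdAct C n (outMarg q) hdq) f = outExp q f :=
      outExp_stdAct_outMarg q f
    rw [← h2]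
    exact tendsto_const_nhds
  by_cases hνe : outMarg p = outMarg q
  · -- equal marginals: perturb
    obtain ⟨c, hc, hδ⟩ : ∃ c, c ∈ C ∧ ddist c ≠ outMarg q := by
      by_cases h1 : outMarg q = ddist c1
      · refine ⟨c2, hc2, ?_⟩
        rw [h1]
        exact fun h => hne12 (ddist_injective h).symm
      · exact ⟨c1, hc1, fun h => h1 h.symm⟩
    have htk0 : ∀ k : ℕ, 0 < 1/((k:ℝ)+2) := fun k => (tkseq_mem k).1
    have htk1 : ∀ k : ℕ, 1/((k:ℝ)+2) < 1 := fun k => (tkseq_mem k).2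
    have hdκ : ∀ k : ℕ, IsDist C ((1/((k:ℝ)+2)) • ddist c + (1 - 1/((k:ℝ)+2)) • outMarg q) :=
      fun k => isDist_mixdist (isDist_ddist hc) hdq (htk0 k).le (htk1 k).le
    have hκne : ∀ k : ℕ,
        (1/((k:ℝ)+2)) • ddist c + (1 - 1/((k:ℝ)+2)) • outMarg q ≠ outMarg p := by
      intro k
      rw [hνe]
      exact mixdist_ne hδ (htk0 k)
    have hmenus : ∀ k : ℕ, IsMenu ({stdAct C n (outMarg p) hdp,
        stdAct C n ((1/((k:ℝ)+2)) • ddist c + (1 - 1/((k:ℝ)+2)) • outMarg q) (hdκ k)} :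
          Finset (Act n C)) :=
      fun k => isMenu_std_pair (n := n) hdp (hdκ k) (fun h => hκne k h.symm)
    have hotq : OutTendsto
        (fun k => stdAct C n ((1/((k:ℝ)+2)) • ddist c + (1 - 1/((k:ℝ)+2)) • outMarg q)
          (hdκ k)) q := by
      intro f hf
      have hval : ∀ k : ℕ, outExp (stdAct C n ((1/((k:ℝ)+2)) • ddist c
          + (1 - 1/((k:ℝ)+2)) • outMarg q) (hdκ k)) f
          = (1/((k:ℝ)+2)) * f c + (1 - 1/((k:ℝ)+2)) * outExp q f := by
        intro k
        have h1 := outExp_stdAct_mixdist (n := n) (1/((k:ℝ)+2)) (htk0 k).le (htk1 k).le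
          (ddist c) (outMarg q) (isDist_ddist hc) hdq f
        rw [outExp_dirac hc] at h1
        have h2 : outExp (stdAct C n (outMarg q) hdq) f = outExp q f :=
          outExp_stdAct_outMarg q f
        rw [h2] at h1
        exact h1
      have h0 : Tendsto (fun k : ℕ => 1/((k:ℝ)+2)) atTop (nhds 0) := tendsto_tk
      have h2 : Tendsto (fun k : ℕ => (1:ℝ) - 1/((k:ℝ)+2)) atTop (nhds (1 - 0)) :=
        (tendsto_const_nhds (x := (1:ℝ)) (f := (atTop : Filter ℕ))).sub h0
      rw [show (1:ℝ) - 0 = 1 from by norm_num] at h2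
      have h3 := (h0.mul_const (f c)).add (h2.mul_const (outExp q f))
      rw [zero_mul, one_mul, zero_add] at h3
      exact h3.congr (fun k => (hval k).symm)
    have hconc := hcont S (fun _ => stdAct C n (outMarg p) hdp)
      (fun k => stdAct C n ((1/((k:ℝ)+2)) • ddist c + (1 - 1/((k:ℝ)+2)) • outMarg q)
        (hdκ k)) p q hS (cp_trivial ρ S) hmenus (fun _ => cp_trivial ρ _) hp hq hot_p hotq
    have hterm : ∀ k : ℕ, ρ.prob (stdAct C n ((1/((k:ℝ)+2)) • ddist c
          + (1 - 1/((k:ℝ)+2)) • outMarg q) (hdκ k))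
          ({stdAct C n (outMarg p) hdp,
            stdAct C n ((1/((k:ℝ)+2)) • ddist c + (1 - 1/((k:ℝ)+2)) • outMarg q) (hdκ k)} :
              Finset (Act n C))
        / ρ.prob (stdAct C n (outMarg p) hdp)
          ({stdAct C n (outMarg p) hdp,
            stdAct C n ((1/((k:ℝ)+2)) • ddist c + (1 - 1/((k:ℝ)+2)) • outMarg q) (hdκ k)} :
              Finset (Act n C))
        = Real.exp ((1/((k:ℝ)+2)) * Wf ρ c1 (ddist c)
            + (1 - 1/((k:ℝ)+2)) * Wf ρ c1 (outMarg q) - Wf ρ c1 (outMarg p)) := by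
      intro k
      have hG := Gq_exp_Wf hfs hc1 hcont hdp (hdκ k) (fun h => hκne k h.symm)
      rw [Wf_linear hfs hcont hind hc1 (isDist_ddist hc) hdq (htk0 k) (htk1 k)] at hG
      exact hG
    have hlim2 : Tendsto (fun k : ℕ => Real.exp ((1/((k:ℝ)+2)) * Wf ρ c1 (ddist c)
        + (1 - 1/((k:ℝ)+2)) * Wf ρ c1 (outMarg q) - Wf ρ c1 (outMarg p))) atTop
        (nhds (Real.exp (Wf ρ c1 (outMarg q) - Wf ρ c1 (outMarg p)))) := by
      have h0 : Tendsto (fun k : ℕ => 1/((k:ℝ)+2)) atTop (nhds 0) := tendsto_tk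
      have h2 : Tendsto (fun k : ℕ => (1:ℝ) - 1/((k:ℝ)+2)) atTop (nhds (1 - 0)) :=
        (tendsto_const_nhds (x := (1:ℝ)) (f := (atTop : Filter ℕ))).sub h0
      rw [show (1:ℝ) - 0 = 1 from by norm_num] at h2
      have h3 := ((h0.mul_const (Wf ρ c1 (ddist c))).add
        (h2.mul_const (Wf ρ c1 (outMarg q)))).sub_const (Wf ρ c1 (outMarg p))
      rw [zero_mul, one_mul, zero_add] at h3
      exact (Real.continuous_exp.tendsto _).comp h3
    exact tendsto_nhds_unique (Filter.Tendsto.congr hterm hconc) hlim2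
  · -- distinct marginals
    have hconc := hcont S (fun _ => stdAct C n (outMarg p) hdp)
      (fun _ => stdAct C n (outMarg q) hdq) p q hS (cp_trivial ρ S)
      (fun _ => isMenu_std_pair (n := n) hdp hdq hνe) (fun _ => cp_trivial ρ _)
      hp hq hot_p hot_q
    have heq := tendsto_nhds_unique tendsto_const_nhds hconc
    rw [← heq]
    exact Gq_exp_Wf hfs hc1 hcont hdp hdq hνe

theorem Wf_sum (hfs : AxiomFullSupport ρ) (hcont : AxiomCPCont ρ (A0 n))
    (hind : AxiomCPInd ρ (A0 n)) (hc1 : c1 ∈ C) :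
    ∀ (N : ℕ) (ν : ℝ →₀ ℝ), IsDist C ν → ν.support.card ≤ N →
      Wf ρ c1 ν = ν.sum (fun c w => w * Wf ρ c1 (ddist c)) := by
  intro N
  induction N with
  | zero =>
    intro ν hν hcard
    obtain ⟨c, hc⟩ := dist_support_nonempty hν
    rw [Finset.card_eq_zero.mp (Nat.le_zero.mp hcard)] at hc
    exact absurd hc (Finset.notMem_empty c)
  | succ N ih =>
    intro ν hν hcard
    obtain ⟨c, hc⟩ := dist_support_nonempty hν
    have hw0 : 0 < ν c := lt_of_le_of_ne (hν.1 c) (Ne.symm (Finsupp.mem_support_iff.mp hc))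
    by_cases hone : ν.support.card = 1
    · have hsupp : ν.support = {c} := by
        obtain ⟨a, ha⟩ := Finset.card_eq_one.mp hone
        rw [ha] at hc
        rw [ha, Finset.mem_singleton.mp hc]
      have hps := Finsupp.support_eq_singleton.mp hsupp
      have htot := hν.2.1
      rw [hps.2, Finsupp.sum_single_index rfl] at htot
      have hν1 : ν = ddist c := by
        rw [hps.2, htot]
        rfl
      rw [hν1]
      show Wf ρ c1 (ddist c)
        = (Finsupp.single c 1).sum (fun d x => x * Wf ρ c1 (ddist d))
      rw [Finsupp.sum_single_index (zero_mul (Wf ρ c1 (ddist c))), one_mul]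
    · have hcard2 : 2 ≤ ν.support.card := by
        have h1 : 1 ≤ ν.support.card := Finset.card_pos.mpr (dist_support_nonempty hν)
        omega
      obtain ⟨c', hc', hcc⟩ := Finset.exists_mem_ne (s := ν.support) (by omega) c
      have hc'0 : 0 < ν c' :=
        lt_of_le_of_ne (hν.1 c') (Ne.symm (Finsupp.mem_support_iff.mp hc'))
      have hsum_erase : ∑ x ∈ ν.support.erase c, ν x = 1 - ν c := by
        have h1 := Finset.add_sum_erase ν.support ν hc
        have htot : ∑ x ∈ ν.support, ν x = 1 := hν.2.1
        linarith
      have hw1 : ν c < 1 := by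
        have hle : ν c' ≤ ∑ x ∈ ν.support.erase c, ν x :=
          Finset.single_le_sum (fun x _ => hν.1 x) (Finset.mem_erase.mpr ⟨hcc, hc'⟩)
        linarith
      have hw1' : (0:ℝ) < 1 - ν c := by linarith
      set ν' := (1 - ν c)⁻¹ • (ν.erase c) with hν'def
      have hν'app : ∀ d, ν' d = (1 - ν c)⁻¹ * (ν.erase c) d := by
        intro d
        rw [hν'def, Finsupp.smul_apply, smul_eq_mul]
      have hsub' : ν'.support ⊆ ν.support.erase c := by
        have h1 : ν'.support ⊆ (ν.erase c).support := Finsupp.support_smul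
        rwa [Finsupp.support_erase] at h1
      have hd' : IsDist C ν' := by
        refine ⟨?_, ?_, ?_⟩
        · intro d
          rw [hν'app]
          apply mul_nonneg (inv_nonneg.mpr hw1'.le)
          by_cases hdc : d = c
          · rw [hdc, Finsupp.erase_same]
          · rw [Finsupp.erase_ne hdc]
            exact hν.1 d
        · have he1 : (ν.erase c).sum (fun _ x => x) = 1 - ν c := by
            rw [Finsupp.sum, Finsupp.support_erase, ← hsum_erase]
            apply Finset.sum_congr rfl
            intro x hx
            exact Finsupp.erase_ne (Finset.mem_erase.mp hx).1
          rw [hν'def, Finsupp.sum_smul_index (fun _ => rfl)]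
          have he2 : ((ν.erase c).sum fun _ x => (1 - ν c)⁻¹ * x)
              = (1 - ν c)⁻¹ * ((ν.erase c).sum fun _ x => x) := (Finsupp.mul_sum _ _).symm
          rw [he2, he1, inv_mul_cancel₀ hw1'.ne']
        · intro d hd
          exact hν.2.2 d (Finset.mem_of_mem_erase (hsub' hd))
      have hdecomp : ν = ν c • ddist c + (1 - ν c) • ν' := by
        ext d
        rw [mixdist_apply, hν'app]
        by_cases hdc : d = c
        · subst hdc
          rw [Finsupp.erase_same, ddist, Finsupp.single_eq_same]
          ring
        · rw [Finsupp.erase_ne hdc, ddist, Finsupp.single_apply,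
            if_neg (fun h => hdc h.symm)]
          field_simp
          ring
      have hlin := Wf_linear hfs hcont hind hc1 (isDist_ddist (hν.2.2 c hc)) hd' hw0 hw1
      rw [← hdecomp] at hlin
      have hsupcard : ν'.support.card ≤ N := by
        have h2 := Finset.card_le_card hsub'
        have h3 : (ν.support.erase c).card = ν.support.card - 1 :=
          Finset.card_erase_of_mem hc
        omega
      have hIH := ih ν' hd' hsupcard
      rw [hlin, hIH]
      have hA : ν.sum (fun d x => x * Wf ρ c1 (ddist d))
          = ∑ d ∈ ν.support, ν d * Wf ρ c1 (ddist d) := rfl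
      have hB : ν'.sum (fun d x => x * Wf ρ c1 (ddist d))
          = ∑ d ∈ ν.support.erase c, ν' d * Wf ρ c1 (ddist d) := by
        refine Finset.sum_subset hsub' ?_
        intro d hd1 hd2
        have h0 : ν' d = 0 := Finsupp.notMem_support_iff.mp hd2
        simp [h0]
      rw [hA, hB, ← Finset.add_sum_erase _ _ hc, Finset.mul_sum]
      congr 1
      apply Finset.sum_congr rfl
      intro d hd
      rw [hν'app, Finsupp.erase_ne (Finset.mem_erase.mp hd).1]
      field_simp

theorem uf_strictMono (hfs : AxiomFullSupport ρ) (hcont : AxiomCPCont ρ (A0 n))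
    (hdom : AxiomCPDom ρ (A0 n)) (hc1 : c1 ∈ C) : StrictMonoOn (uf ρ c1) C := by
  intro c hc c' hc' hlt
  have hf : StrictFOSD (stdAct C n (ddist c') (isDist_ddist hc'))
      (stdAct C n (ddist c) (isDist_ddist hc)) := by
    constructor
    · intro t
      rw [outCDF_dirac hc', outCDF_dirac hc]
      split_ifs with h1 h2
      · exact le_refl _
      · exfalso; exact h2 (by linarith)
      · norm_num
      · exact le_refl _
    · refine ⟨c, ?_⟩
      rw [outCDF_dirac hc', outCDF_dirac hc, if_neg (by linarith), if_pos le_rfl]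
      norm_num
  have hneδ : ddist c' ≠ ddist c := fun h => hlt.ne (ddist_injective h).symm
  have hm := isMenu_std_pair (n := n) (isDist_ddist hc') (isDist_ddist hc) hneδ
  have hd := hdom _ _ hm (cp_trivial ρ _) hf
  have hsum := pair_sum (ρ := ρ) hm
  have hpos := hfs _ hm _ (Finset.mem_insert.mpr (Or.inr (Finset.mem_singleton_self _)))
  have hGval : 1 < Gq ρ (ddist c) (ddist c') (isDist_ddist hc) (isDist_ddist hc') := by
    rw [Gq, Finset.pair_comm (stdAct C n (ddist c) (isDist_ddist hc))
      (stdAct C n (ddist c') (isDist_ddist hc'))]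
    rw [one_lt_div hpos]
    linarith
  have hGW := Gq_exp_Wf hfs hc1 hcont (isDist_ddist hc) (isDist_ddist hc')
    (fun h => hlt.ne (ddist_injective h))
  rw [hGW, show (1:ℝ) = Real.exp 0 from Real.exp_zero.symm] at hGval
  have h0 := Real.exp_lt_exp.mp hGval
  have : 0 < uf ρ c1 c' - uf ρ c1 c := h0
  linarith

theorem uf_seq_cont (hfs : AxiomFullSupport ρ) (hcont : AxiomCPCont ρ (A0 n))
    (hind : AxiomCPInd ρ (A0 n)) (hc1 : c1 ∈ C) {c0 d : ℝ} (hc0 : c0 ∈ C) (hd : d ∈ C)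
    (hdc0 : d ≠ c0) (y : ℕ → ℝ) (hyC : ∀ k, y k ∈ C)
    (hytend : Tendsto y atTop (nhds c0)) :
    Tendsto (fun k => uf ρ c1 (y k)) atTop (nhds (uf ρ c1 c0)) := by
  have hdκ : ∀ k : ℕ, IsDist C ((1/2 : ℝ) • ddist (y k) + (1 - 1/2 : ℝ) • ddist c0) :=
    fun k => isDist_mixdist (α := (1/2 : ℝ)) (isDist_ddist (hyC k)) (isDist_ddist hc0)
      (by norm_num) (by norm_num)
  have hκd : ∀ k : ℕ, (1/2 : ℝ) • ddist (y k) + (1 - 1/2 : ℝ) • ddist c0 ≠ ddist d := by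
    intro k h
    have h0 := DFunLike.congr_fun h c0
    rw [mixdist_apply] at h0
    have e1 : (ddist c0) c0 = 1 := Finsupp.single_eq_same
    have e2 : (ddist d) c0 = 0 := by
      rw [ddist, Finsupp.single_apply, if_neg hdc0]
    have e3 : 0 ≤ (ddist (y k)) c0 := (isDist_ddist (hyC k)).1 c0
    rw [e1, e2] at h0
    linarith
  have hmenus : ∀ k : ℕ, IsMenu ({stdAct C n (ddist d) (isDist_ddist hd),
      stdAct C n ((1/2 : ℝ) • ddist (y k) + (1 - 1/2 : ℝ) • ddist c0) (hdκ k)} :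
        Finset (Act n C)) :=
    fun k => isMenu_std_pair (n := n) (isDist_ddist hd) (hdκ k)
      (fun h => hκd k h.symm)
  have hδne : ddist d ≠ ddist c0 := fun h => hdc0 (ddist_injective h)
  have hS := isMenu_std_pair (n := n) (isDist_ddist hd) (isDist_ddist hc0) hδne
  have hotq : OutTendsto
      (fun k => stdAct C n ((1/2 : ℝ) • ddist (y k) + (1 - 1/2 : ℝ) • ddist c0) (hdκ k))
      (stdAct C n (ddist c0) (isDist_ddist hc0)) := by
    intro f hf
    have hval : ∀ k : ℕ, outExp (stdAct C n ((1/2 : ℝ) • ddist (y k)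
        + (1 - 1/2 : ℝ) • ddist c0) (hdκ k)) f = (1/2 : ℝ) * f (y k) + (1 - 1/2) * f c0 := by
      intro k
      have h1 := outExp_stdAct_mixdist (n := n) (1/2 : ℝ) (by norm_num) (by norm_num)
        (ddist (y k)) (ddist c0) (isDist_ddist (hyC k)) (isDist_ddist hc0) f
      rw [outExp_dirac (hyC k), outExp_dirac hc0] at h1
      exact h1
    have h2 : Tendsto (fun k => f (y k)) atTop (nhds (f c0)) :=
      (hf.tendsto c0).comp hytend
    have h3 := (h2.const_mul (1/2 : ℝ)).add
      ((tendsto_const_nhds (x := f c0) (f := (atTop : Filter ℕ))).const_mul (1 - 1/2 : ℝ))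
    have h4 : (1/2 : ℝ) * f c0 + (1 - 1/2) * f c0 = f c0 := by ring
    rw [h4] at h3
    have h5 : outExp (stdAct C n (ddist c0) (isDist_ddist hc0)) f = f c0 :=
      outExp_dirac hc0 f
    rw [h5]
    exact h3.congr (fun k => (hval k).symm)
  have hconc := hcont {stdAct C n (ddist d) (isDist_ddist hd),
      stdAct C n (ddist c0) (isDist_ddist hc0)}
    (fun _ => stdAct C n (ddist d) (isDist_ddist hd))
    (fun k => stdAct C n ((1/2 : ℝ) • ddist (y k) + (1 - 1/2 : ℝ) • ddist c0) (hdκ k))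
    (stdAct C n (ddist d) (isDist_ddist hd)) (stdAct C n (ddist c0) (isDist_ddist hc0))
    hS (cp_trivial ρ _) hmenus (fun _ => cp_trivial ρ _) (Finset.mem_insert_self _ _)
    (Finset.mem_insert.mpr (Or.inr (Finset.mem_singleton_self _)))
    (fun f _ => tendsto_const_nhds) hotq
  have hterm : ∀ k : ℕ,
      ρ.prob (stdAct C n ((1/2 : ℝ) • ddist (y k) + (1 - 1/2 : ℝ) • ddist c0) (hdκ k))
        ({stdAct C n (ddist d) (isDist_ddist hd),
          stdAct C n ((1/2 : ℝ) • ddist (y k) + (1 - 1/2 : ℝ) • ddist c0) (hdκ k)} :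
            Finset (Act n C))
      / ρ.prob (stdAct C n (ddist d) (isDist_ddist hd))
        ({stdAct C n (ddist d) (isDist_ddist hd),
          stdAct C n ((1/2 : ℝ) • ddist (y k) + (1 - 1/2 : ℝ) • ddist c0) (hdκ k)} :
            Finset (Act n C))
      = Real.exp ((1/2 : ℝ) * uf ρ c1 (y k) + (1 - 1/2) * uf ρ c1 c0
          - Wf ρ c1 (ddist d)) := by
    intro k
    have hG := Gq_exp_Wf hfs hc1 hcont (isDist_ddist hd) (hdκ k) (fun h => hκd k h.symm)
    rw [Wf_linear (α := (1/2 : ℝ)) hfs hcont hind hc1 (isDist_ddist (hyC k))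
      (isDist_ddist hc0) (by norm_num) (by norm_num)] at hG
    exact hG
  have h1 := Filter.Tendsto.congr hterm hconc
  have h2 : ρ.prob (stdAct C n (ddist c0) (isDist_ddist hc0))
        ({stdAct C n (ddist d) (isDist_ddist hd),
          stdAct C n (ddist c0) (isDist_ddist hc0)} : Finset (Act n C))
      / ρ.prob (stdAct C n (ddist d) (isDist_ddist hd))
        ({stdAct C n (ddist d) (isDist_ddist hd),
          stdAct C n (ddist c0) (isDist_ddist hc0)} : Finset (Act n C))
      = Real.exp (uf ρ c1 c0 - Wf ρ c1 (ddist d)) :=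
    Gq_exp_Wf hfs hc1 hcont (isDist_ddist hd) (isDist_ddist hc0) hδne
  rw [h2] at h1
  have h3 := ((Real.continuousAt_log (Real.exp_pos
    (uf ρ c1 c0 - Wf ρ c1 (ddist d))).ne').tendsto).comp h1
  simp only [Function.comp_def, Real.log_exp] at h3
  have h5 := (h3.add_const (Wf ρ c1 (ddist d))).sub_const ((1 - 1/2 : ℝ) * uf ρ c1 c0)
  have h6 := h5.const_mul (2:ℝ)
  have hlim : (2:ℝ) * ((uf ρ c1 c0 - Wf ρ c1 (ddist d) + Wf ρ c1 (ddist d))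
      - (1 - 1/2 : ℝ) * uf ρ c1 c0) = uf ρ c1 c0 := by ring
  rw [hlim] at h6
  refine h6.congr (fun k => ?_)
  ring

theorem uf_continuousOn (hfs : AxiomFullSupport ρ) (hcont : AxiomCPCont ρ (A0 n))
    (hind : AxiomCPInd ρ (A0 n)) (hc1 : c1 ∈ C) {c2 : ℝ} (hc2 : c2 ∈ C) (h12 : c1 ≠ c2) :
    ContinuousOn (uf ρ c1) C := by
  intro c0 hc0
  have hseq : ∀ x : ℕ → ℝ, Tendsto x atTop (nhdsWithin c0 C) →
      Tendsto ((uf ρ c1) ∘ x) atTop (nhds (uf ρ c1 c0)) := by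
    intro x hx
    obtain ⟨d, hd, hdc0⟩ : ∃ d, d ∈ C ∧ d ≠ c0 := by
      by_cases h : c0 = c1
      · exact ⟨c2, hc2, fun hh => h12 (hh.trans h).symm⟩
      · exact ⟨c1, hc1, fun hh => h hh.symm⟩
    have hev : ∀ᶠ k in atTop, x k ∈ C := hx self_mem_nhdsWithin
    have hyC : ∀ k, (if x k ∈ C then x k else c0) ∈ C := by
      intro k
      split_ifs with h'
      exacts [h', hc0]
    have hytend : Tendsto (fun k => if x k ∈ C then x k else c0) atTop (nhds c0) := by
      have hx' : Tendsto x atTop (nhds c0) := hx.mono_right nhdsWithin_le_nhds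
      apply hx'.congr'
      exact hev.mono (fun k hk => (if_pos hk).symm)
    have h7 := uf_seq_cont hfs hcont hind hc1 hc0 hd hdc0 _ hyC hytend
    apply h7.congr'
    exact hev.mono (fun k hk => by
      show uf ρ c1 (if x k ∈ C then x k else c0) = uf ρ c1 (x k)
      rw [if_pos hk])
  exact tendsto_iff_seq_tendsto.mpr hseq

end Backward3

end AuxProof

/-- Corollary: characterization of Logit-EU representations. -/
theorem stmt6 (n : ℕ) (C : Set ℝ) (hC : IsCompact C) (hC2 : ∃ x ∈ C, ∃ y ∈ C, x ≠ y)
    (ρ : RCR n C) :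
    HasLogitEU ρ ↔
      (MinSeps ρ = {({Fin.last (n + 1)} : Finset (Node n))} ∧ AxiomFullSupport ρ ∧
        ∀ (m : ℕ) (A : Fin (m + 1) → Finset (Node n)), IsSepOrdering ρ A →
          AxiomCPInd ρ A ∧ AxiomCPDom ρ A ∧ AxiomCPCont ρ A) := by
  obtain ⟨c1, hc1, c2, hc2, hne12⟩ := hC2
  constructor
  · rintro ⟨u, hu1, hu2, hF⟩
    refine ⟨fwd_minseps (hF := hF) hu2 ⟨c1, hc1, c2, hc2, hne12⟩, ?_, ?_⟩
    · intro S hS a ha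
      exact fwd_pos (hF := hF) hS ha
    · intro m A _
      exact ⟨fwd_cpind (hF := hF) A, fwd_cpdom (hF := hF) hu2 A,
        fwd_cpcont (hF := hF) hu1 hC A⟩
  · rintro ⟨hms, hfs, hax⟩
    have hsep := sepOrdering_A0 ρ hms
    obtain ⟨hind, hdom, hcont⟩ := hax 0 (A0 n) hsep
    refine ⟨uf ρ c1, uf_continuousOn hfs hcont hind hc1 hc2 hne12,
      uf_strictMono hfs hcont hdom hc1, ?_⟩
    intro S hS a ha
    have hEW : ∀ b : Act n C, outExp b (uf ρ c1) = Wf ρ c1 (outMarg b) := by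
      intro b
      rw [outExp_eq_outMarg_sum]
      exact (Wf_sum hfs hcont hind hc1 (outMarg b).support.card (outMarg b)
        (isDist_outMarg b) le_rfl).symm
    have hrat : ∀ b ∈ S, ρ.prob b S
        = ρ.prob a S * Real.exp (Wf ρ c1 (outMarg b) - Wf ρ c1 (outMarg a)) := by
      intro b hb
      have h := menu_ratio hfs hcont hind hc1 hc2 hne12 hS ha hb
      have hpa := (hfs S hS a ha).ne'
      rw [div_eq_iff hpa] at h
      rw [h]
      ring
    have hsum := ρ.sum_one S hS
    have hsum2 : ∑ b ∈ S, ρ.prob b S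
        = ρ.prob a S * (Real.exp (Wf ρ c1 (outMarg a)))⁻¹
          * ∑ b ∈ S, Real.exp (Wf ρ c1 (outMarg b)) := by
      rw [Finset.mul_sum]
      apply Finset.sum_congr rfl
      intro b hb
      rw [hrat b hb, Real.exp_sub]
      field_simp
    have hpos : 0 < ∑ b ∈ S, Real.exp (Wf ρ c1 (outMarg b)) :=
      Finset.sum_pos (fun b _ => Real.exp_pos _) (menu_nonempty hS)
    rw [hsum] at hsum2
    have he := Real.exp_ne_zero (Wf ρ c1 (outMarg a))
    have hfinal : ρ.prob a S * ∑ b ∈ S, Real.exp (Wf ρ c1 (outMarg b))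
        = Real.exp (Wf ρ c1 (outMarg a)) := by
      have h2 := hsum2.symm
      field_simp at h2
      linarith [h2]
    have hsumEq : (∑ b ∈ S, Real.exp (outExp b (uf ρ c1)))
        = ∑ b ∈ S, Real.exp (Wf ρ c1 (outMarg b)) :=
      Finset.sum_congr rfl (fun b _ => by rw [hEW b])
    rw [hEW a, hsumEq, eq_div_iff hpos.ne']
    exact hfinal


end SubjCausality
end

section
/- Let R be a perfect DAG and let (i_0,…,i_m) be an R-AP. If ¬(i_j R i_k) for some indices j < k ≤ m, then ¬(i_j R i_l) for all l with k < l ≤ m. Equivalently, for any j < k < m, if i_j R i_{k+1} then i_j R i_k. -/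
open scoped Classical BigOperators
open Filter

namespace SubjCausality

variable {n : ℕ} {C : Set ℝ}

private lemma chain_transGen {n : ℕ} {R : Node n → Node n → Prop} {l : List (Node n)}
    (hc : l.Chain' R) : ∀ (j k : ℕ) (hj : j < l.length) (hk : k < l.length), j < k →
    Relation.TransGen R (l.get ⟨j, hj⟩) (l.get ⟨k, hk⟩) := by
  intro j k hj
  induction k with
  | zero => omega
  | succ k ih =>
    intro hk hjk
    have hstep : R (l.get ⟨k, by omega⟩) (l.get ⟨k + 1, hk⟩) :=
      List.isChain_iff_getElem.mp hc k (by omega)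
    rcases Nat.lt_or_ge j k with h | h
    · exact (ih (by omega) h).tail hstep
    · have hjk' : j = k := by omega
      subst hjk'; exact Relation.TransGen.single hstep

private lemma step_back {n : ℕ} {R : Node n → Node n → Prop}
    (hdag : IsDAGRel R) (hperf : IsPerfect R) {l : List (Node n)} (hc : l.Chain' R)
    (j k : ℕ) (hj : j < l.length) (hk : k < l.length) (hk1 : k + 1 < l.length)
    (hjk : j < k) (h : R (l.get ⟨j, hj⟩) (l.get ⟨k + 1, hk1⟩)) :
    R (l.get ⟨j, hj⟩) (l.get ⟨k, hk⟩) := by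
  have htg : Relation.TransGen R (l.get ⟨j, hj⟩) (l.get ⟨k, hk⟩) :=
    chain_transGen hc j k hj hk hjk
  have hne : l.get ⟨j, hj⟩ ≠ l.get ⟨k, hk⟩ := by
    intro he; exact hdag _ (he ▸ htg)
  have hkk : R (l.get ⟨k, hk⟩) (l.get ⟨k + 1, hk1⟩) :=
    List.isChain_iff_getElem.mp hc k (by omega)
  rcases hperf _ _ _ hne h hkk with h' | h'
  · exact h'
  · exact absurd (htg.tail h') (hdag _)

/-- along an active path of a perfect DAG, once a shortcut link fails it
fails forever; equivalently backward links of shortcuts exist. -/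
theorem stmt17 (n : ℕ) (R : Node n → Node n → Prop)
    (hdag : IsDAGRel R) (hperf : IsPerfect R)
    (l : List (Node n)) (hap : IsAP R l) :
    (∀ j k L : Fin l.length, j < k → k < L →
      ¬ R (l.get j) (l.get k) → ¬ R (l.get j) (l.get L)) ∧
    (∀ (j k : ℕ) (hk1 : k + 1 < l.length) (hjk : j < k),
      R (l.get ⟨j, by omega⟩) (l.get ⟨k + 1, hk1⟩) →
      R (l.get ⟨j, by omega⟩) (l.get ⟨k, by omega⟩)) := by
  obtain ⟨-, -, -, hc⟩ := hap
  have key : ∀ (j k L : ℕ) (hj : j < l.length) (hk : k < l.length) (hL : L < l.length),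
      j < k → k ≤ L → R (l.get ⟨j, hj⟩) (l.get ⟨L, hL⟩) → R (l.get ⟨j, hj⟩) (l.get ⟨k, hk⟩) := by
    intro j k L hj hk
    induction L with
    | zero => omega
    | succ L ih =>
      intro hL hjk hkL h
      rcases Nat.lt_or_ge k (L + 1) with h' | h'
      · have hL' : L < l.length := by omega
        exact ih hL' hjk (by omega) (step_back hdag hperf hc j L hj hL' hL (by omega) h)
      · have : k = L + 1 := by omega
        subst this; exact h
  constructor
  · rintro ⟨j, hj⟩ ⟨k, hk⟩ ⟨L, hL⟩ hjk hkL hnjk hjL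
    exact hnjk (key j k L hj hk hL (by simpa using hjk) (le_of_lt (by simpa using hkL)) hjL)
  · intro j k hk1 hjk h
    exact step_back hdag hperf hc j k (by omega) (by omega) hk1 hjk h


end SubjCausality
end
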